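/- arXiv:1905.08234 — 13 statements merged into one kernel-verified Lean document; each statement's English description precedes it below -/
import Mathlib

section
/- In the winner-bid auction with valuations v_l < v_h (both positive even integers) and bid space {0,1,...,p̄} with p̄ ≥ v_h/2 + 2, in every Nash equilibrium (allowing mixed strategies) the maximal bid in the support of the higher-valuation agent's strategy is at most v_h/2. -/
open Finset Filter

/-- Utility in the winner-bid auction for an agent with value `v` bidding `b`
when the opponent bids `c`: the higher bidder wins the object and pays their own
bid to the other agent; ties are broken uniformly at random. -/
noncomputable def util (v b c : ℕ) : ℝ :=
  if c < b then (v : ℝ) - b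
  else if b < c then (c : ℝ)
  else (((v : ℝ) - b) + b) / 2

/-- Expected utility of bidding `b` against the mixed strategy `σ` of the opponent. -/
noncomputable def eu (pbar v : ℕ) (σ : ℕ → ℝ) (b : ℕ) : ℝ :=
  ∑ c ∈ range (pbar + 1), σ c * util v b c

/-- A mixed strategy on the bid space `{0,...,pbar}`. -/
def IsStrategy (pbar : ℕ) (σ : ℕ → ℝ) : Prop :=
  (∀ b, 0 ≤ σ b) ∧ (∑ b ∈ range (pbar + 1), σ b = 1) ∧ ∀ b, pbar < b → σ b = 0

/-- Nash equilibrium of the winner-bid auction with valuations `vl` (agent l) and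
`vh` (agent h). -/
def IsNash (pbar vl vh : ℕ) (σl σh : ℕ → ℝ) : Prop :=
  IsStrategy pbar σl ∧ IsStrategy pbar σh ∧
  (∀ b ∈ range (pbar + 1), 0 < σl b →
    ∀ b' ∈ range (pbar + 1), eu pbar vl σh b' ≤ eu pbar vl σh b) ∧
  (∀ b ∈ range (pbar + 1), 0 < σh b →
    ∀ b' ∈ range (pbar + 1), eu pbar vh σl b' ≤ eu pbar vh σl b)

/-- Expected payoff of the agent with value `v` playing `σown` against `σopp`. -/
noncomputable def payoff (pbar v : ℕ) (σown σopp : ℕ → ℝ) : ℝ :=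
  ∑ b ∈ range (pbar + 1), σown b * eu pbar v σopp b

/-- Probability that the agent playing `σown` receives the object. -/
noncomputable def winProb (pbar : ℕ) (σown σopp : ℕ → ℝ) : ℝ :=
  ∑ b ∈ range (pbar + 1), ∑ c ∈ range (pbar + 1),
    σown b * σopp c * (if c < b then 1 else if b < c then 0 else 1 / 2)

/-- An equilibrium is efficient if the higher-valuation agent (playing `σh`)
receives the object with probability one, i.e., the lower-valuation agent
receives it with probability zero. -/
def Efficient (pbar : ℕ) (σl σh : ℕ → ℝ) : Prop := winProb pbar σl σh = 0

/-- The pure strategy bidding `b`. -/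
noncomputable def pureS (b : ℕ) : ℕ → ℝ := fun c => if c = b then 1 else 0

/-- Weak payoff monotonicity for the agent with value `v` playing `σown` against `σopp`. -/
def WPMon (pbar v : ℕ) (σown σopp : ℕ → ℝ) : Prop :=
  ∀ m ∈ range (pbar + 1), ∀ n ∈ range (pbar + 1),
    σown n < σown m → eu pbar v σopp n < eu pbar v σopp m

/-- (Full) payoff monotonicity for the agent with value `v`. -/
def PMon (pbar v : ℕ) (σown σopp : ℕ → ℝ) : Prop :=
  ∀ m ∈ range (pbar + 1), ∀ n ∈ range (pbar + 1),
    (eu pbar v σopp n ≤ eu pbar v σopp m ↔ σown n ≤ σown m)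

/-- Empirical equilibrium: a Nash equilibrium that is the pointwise limit of a
sequence of weakly payoff monotone strategy profiles. -/
def IsEmpirical (pbar vl vh : ℕ) (σl σh : ℕ → ℝ) : Prop :=
  IsNash pbar vl vh σl σh ∧
  ∃ s : ℕ → (ℕ → ℝ) × (ℕ → ℝ),
    (∀ n, IsStrategy pbar (s n).1 ∧ IsStrategy pbar (s n).2 ∧
      WPMon pbar vl (s n).1 (s n).2 ∧ WPMon pbar vh (s n).2 (s n).1) ∧
    ∀ b, Tendsto (fun n => (s n).1 b) atTop (nhds (σl b)) ∧
         Tendsto (fun n => (s n).2 b) atTop (nhds (σh b))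

lemma eu_step (pbar v : ℕ) (τ : ℕ → ℝ) (hτ : ∀ c, 0 ≤ τ c)
    (b : ℕ) (hb1 : 1 ≤ b) (hbp : b ≤ pbar) (hb : v / 2 < b) (hev : Even v) :
    eu pbar v τ b + ∑ c ∈ range (b + 1), τ c ≤ eu pbar v τ (b - 1) := by
  have hcast : ((v / 2 : ℕ) : ℝ) = (v : ℝ) / 2 := by
    obtain ⟨k, hk⟩ := hev
    subst hk
    have : (k + k) / 2 = k := by omega
    rw [this]; push_cast; ring
  have hbr : (v : ℝ) / 2 + 1 ≤ (b : ℝ) := by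
    have h1 : (v / 2 : ℕ) + 1 ≤ b := hb
    have h2 : (((v / 2 : ℕ) : ℝ)) + 1 ≤ (b : ℝ) := by exact_mod_cast h1
    linarith [hcast ▸ h2]
  have hbc : ((b - 1 : ℕ) : ℝ) = (b : ℝ) - 1 := by
    rw [Nat.cast_sub hb1]; norm_num
  have hsum : ∑ c ∈ range (b + 1), τ c
      = ∑ c ∈ range (pbar + 1), (if c ≤ b then τ c else 0) := by
    rw [← Finset.sum_subset (Finset.range_subset_range.mpr (by omega : b + 1 ≤ pbar + 1))
      (fun x _ hx => by
        simp only [mem_range, not_lt] at hx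
        exact if_neg (by omega))]
    exact (Finset.sum_congr rfl (fun c hc => by
      simp only [mem_range] at hc
      exact (if_pos (by omega)).symm))
  rw [hsum, eu, eu, ← Finset.sum_add_distrib]
  apply Finset.sum_le_sum
  intro c _
  have hnn := hτ c
  rcases lt_trichotomy c (b - 1) with h | h | h
  · have h1 : c < b := by omega
    have h2 : ¬ (b - 1 < c) := by omega
    have h3 : ¬ (b - 1 ≤ c) := by omega
    simp only [util, if_pos h, if_pos h1, if_pos (by omega : c ≤ b)]
    rw [hbc]
    nlinarith
  · have h1 : c < b := by omega
    have h2 : ¬ (c < b - 1) := by omega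
    have h3 : ¬ (b - 1 < c) := by omega
    simp only [util, if_neg h2, if_neg h3, if_pos h1, if_pos (by omega : c ≤ b)]
    nlinarith
  · rcases lt_trichotomy c b with h4 | h4 | h4
    · omega
    · subst h4
      have h2 : ¬ (c < c) := lt_irrefl c
      have h3 : c - 1 < c := by omega
      simp only [util, if_neg (by omega : ¬ c < c - 1), if_pos h3, if_neg h2, le_refl, if_pos]
      nlinarith
    · have h2 : ¬ (c < b - 1) := by omega
      have h3 : b - 1 < c := by omega
      have h5 : ¬ (c < b) := by omega
      simp only [util, if_neg h2, if_pos h3, if_neg h5, if_pos h4, if_neg (by omega : ¬ c ≤ b)]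
      linarith

theorem stmt0 (vl vh pbar : ℕ) (hvl : 0 < vl) (hevl : Even vl) (hevh : Even vh)
    (hlt : vl < vh) (hpbar : vh / 2 + 2 ≤ pbar) (σl σh : ℕ → ℝ)
    (hN : IsNash pbar vl vh σl σh) :
    ∀ b, 0 < σh b → b ≤ vh / 2 := by
  obtain ⟨hSl, hSh, hNl, hNh⟩ := hN
  intro b hb
  by_contra hgt
  push_neg at hgt
  have hvh2 : 2 ≤ vh := by omega
  have hbp : b ≤ pbar := by
    by_contra h
    push_neg at h
    have := hSh.2.2 b h
    linarith
  have hb1 : 1 ≤ b := by omega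
  -- Step for h: eu (b-1) ≥ eu b + ∑_{c ≤ b} σl c
  have hstep := eu_step pbar vh σl hSl.1 b hb1 hbp hgt hevh
  have hnash := hNh b (mem_range.mpr (by omega)) hb (b - 1) (mem_range.mpr (by omega))
  have hzero : ∀ c ∈ range (b + 1), σl c = 0 := by
    have hsle : ∑ c ∈ range (b + 1), σl c ≤ 0 := by linarith
    intro c hc
    exact le_antisymm
      (by
        have := Finset.single_le_sum (f := σl) (fun i _ => hSl.1 i) hc
        linarith)
      (hSl.1 c)
  -- l must put positive probability somewhere, necessarily above b
  obtain ⟨c, hcm, hcp⟩ : ∃ c ∈ range (pbar + 1), 0 < σl c := by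
    by_contra h
    push_neg at h
    have : ∑ c ∈ range (pbar + 1), σl c ≤ 0 := Finset.sum_nonpos h
    rw [hSl.2.1] at this
    linarith
  have hcb : b < c := by
    by_contra h
    push_neg at h
    have := hzero c (mem_range.mpr (by omega))
    linarith
  have hcpb : c ≤ pbar := Nat.lt_succ_iff.mp (mem_range.mp hcm)
  have hvl2 : vl / 2 < c := by
    have : vl / 2 ≤ vh / 2 := Nat.div_le_div_right (le_of_lt hlt)
    omega
  -- Step for l at c
  have hstep2 := eu_step pbar vl σh hSh.1 c (by omega) hcpb hvl2 hevl
  have hbin : b ∈ range (c + 1) := mem_range.mpr (by omega)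
  have hsge : σh b ≤ ∑ d ∈ range (c + 1), σh d :=
    Finset.single_le_sum (fun i _ => hSh.1 i) hbin
  have hnash2 := hNl c hcm hcp (c - 1) (mem_range.mpr (by omega))
  linarith
end

section
/- In the winner-bid auction with valuations v_l < v_h, in every Nash equilibrium (allowing mixed strategies) the minimal bid in the support of the higher-valuation agent's strategy is at least v_l/2. -/
open Finset Filter

lemma util_win {v b c : ℕ} (h : c < b) : util v b c = (v:ℝ) - b := by simp [util, h]
lemma util_lose {v b c : ℕ} (h : b < c) : util v b c = (c:ℝ) := by
  simp [util, h, Nat.lt_asymm h]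
lemma util_tie (v b : ℕ) : util v b b = (v:ℝ)/2 := by simp [util]
lemma eu_sub (pbar v : ℕ) (σ : ℕ → ℝ) (b b' : ℕ) :
    eu pbar v σ b' - eu pbar v σ b
      = ∑ c ∈ range (pbar+1), σ c * (util v b' c - util v b c) := by
  simp [eu, ← Finset.sum_sub_distrib, mul_sub]

set_option maxHeartbeats 1000000 in
theorem stmt1 (vl vh pbar : ℕ) (hvl : 0 < vl) (hevl : Even vl) (hevh : Even vh)
    (hlt : vl < vh) (hpbar : vh / 2 + 2 ≤ pbar) (σl σh : ℕ → ℝ)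
    (hN : IsNash pbar vl vh σl σh) :
    ∀ b, 0 < σh b → vl / 2 ≤ b := by
  obtain ⟨k, hk⟩ := hevl
  obtain ⟨m, hm⟩ := hevh
  obtain ⟨⟨hlnn, hlsum, hlhigh⟩, ⟨hhnn, _, hhhigh⟩, hNl, hNh⟩ := hN
  intro b hb
  by_contra hcon
  push_neg at hcon
  have hbk : b < k := by omega
  have hkm : k < m := by omega
  have hmp : m + 2 ≤ pbar := by omega
  have hvlr : (vl:ℝ) = 2*k := by rw [hk]; push_cast; ring
  have hvhr : (vh:ℝ) = 2*m := by rw [hm]; push_cast; ring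
  have hbp : b ≤ pbar := by
    by_contra h
    push_neg at h
    rw [hhhigh b h] at hb
    exact lt_irrefl _ hb
  -- minimum of the support of σh
  have hex : ∃ n, 0 < σh n := ⟨b, hb⟩
  set β := Nat.find hex with hβdef
  have hβpos : 0 < σh β := Nat.find_spec hex
  have hβmin : ∀ n, n < β → σh n = 0 :=
    fun n hn => le_antisymm (not_lt.mp (Nat.find_min hex hn)) (hhnn n)
  have hβb : β ≤ b := Nat.find_min' hex hb
  have hβk : β < k := lt_of_le_of_lt hβb hbk
  have hβkr : (β:ℝ) + 1 ≤ k := by exact_mod_cast (by omega : β + 1 ≤ k)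
  have hkmr : (k:ℝ) + 1 ≤ m := by exact_mod_cast (by omega : k + 1 ≤ m)
  -- Step A : l puts no mass below β
  have stepA : ∀ c, c < β → σl c = 0 := by
    intro c hc
    by_contra hne
    have hcpos : 0 < σl c := lt_of_le_of_ne (hlnn c) (Ne.symm hne)
    have hle := hNl c (mem_range.mpr (by omega)) hcpos β (mem_range.mpr (by omega))
    have hgt : 0 < eu pbar vl σh β - eu pbar vl σh c := by
      rw [eu_sub]
      apply Finset.sum_pos'
      · intro i _
        rcases lt_trichotomy i β with h1 | h1 | h1
        · rw [hβmin i h1]; simp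
        · rw [h1, util_tie, util_lose hc]
          apply mul_nonneg (hhnn β)
          rw [hvlr]; linarith
        · rw [util_lose h1, util_lose (lt_trans hc h1)]; simp
      · refine ⟨β, mem_range.mpr (by omega), ?_⟩
        rw [util_tie, util_lose hc]
        apply mul_pos hβpos
        rw [hvlr]; linarith
    linarith
  -- Step B : l puts no mass below m = vh/2
  have stepB : ∀ c, c < m → σl c = 0 := by
    intro c
    induction c using Nat.strong_induction_on with
    | _ c IH =>
      intro hcm
      rcases Nat.lt_or_ge c β with hcβ | hcβ
      · exact stepA c hcβ
      rcases Nat.lt_or_ge c (β+2) with hc2 | hc2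
      · -- c = β or c = β+1 : compare h's bids β and β+1
        have hle := hNh β (mem_range.mpr (by omega)) hβpos (β+1) (mem_range.mpr (by omega))
        have hsum := eu_sub pbar vh σl β (β+1)
        have hterm : ∀ i ∈ range (pbar+1),
            0 ≤ σl i * (util vh (β+1) i - util vh β i) := by
          intro i _
          rcases lt_trichotomy i β with h1 | h1 | h1
          · rw [stepA i h1]; simp
          · subst h1
            rw [util_win (Nat.lt_succ_self β), util_tie]
            apply mul_nonneg (hlnn β)
            rw [hvhr]; push_cast; linarith
          · rcases Nat.lt_or_ge (β+1) i with h2 | h2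
            · rw [util_lose h2, util_lose h1]; simp
            · have hi : i = β + 1 := by omega
              subst hi
              rw [util_tie, util_lose (Nat.lt_succ_self β)]
              apply mul_nonneg (hlnn _)
              rw [hvhr]; push_cast; linarith
        have hsle : ∑ i ∈ range (pbar+1), σl i * (util vh (β+1) i - util vh β i) ≤ 0 := by
          rw [← hsum]; linarith
        have hc' : c = β ∨ c = β + 1 := by omega
        rcases hc' with rfl | rfl
        · have h1 := Finset.single_le_sum hterm (mem_range.mpr (show β < pbar+1 by omega))
          rw [util_win (Nat.lt_succ_self β), util_tie] at h1
          have hco : (1:ℝ) ≤ (vh:ℝ) - (↑(β+1):ℝ) - (vh:ℝ)/2 := by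
            rw [hvhr]; push_cast; linarith
          nlinarith [hlnn β]
        · have h1 := Finset.single_le_sum hterm (mem_range.mpr (show β+1 < pbar+1 by omega))
          rw [util_tie, util_lose (Nat.lt_succ_self β)] at h1
          have hco : (1:ℝ) ≤ (vh:ℝ)/2 - (↑(β+1):ℝ) := by
            rw [hvhr]; push_cast; linarith
          nlinarith [hlnn (β+1)]
      · -- β + 2 ≤ c < m : compare h's bids β and c
        have hβc : β < c := by omega
        have hle := hNh β (mem_range.mpr (by omega)) hβpos c (mem_range.mpr (by omega))
        have hsum := eu_sub pbar vh σl β c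
        have hcmr : (c:ℝ) + 1 ≤ m := by exact_mod_cast (by omega : c + 1 ≤ m)
        have hterm : ∀ i ∈ range (pbar+1),
            0 ≤ σl i * (util vh c i - util vh β i) := by
          intro i _
          rcases lt_trichotomy i c with h1 | h1 | h1
          · rw [IH i h1 (lt_trans h1 hcm)]; simp
          · rw [h1, util_tie, util_lose hβc]
            apply mul_nonneg (hlnn c)
            rw [hvhr]; linarith
          · rw [util_lose h1, util_lose (lt_trans hβc h1)]; simp
        have hsle : ∑ i ∈ range (pbar+1), σl i * (util vh c i - util vh β i) ≤ 0 := by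
          rw [← hsum]; linarith
        have h1 := Finset.single_le_sum hterm (mem_range.mpr (show c < pbar+1 by omega))
        rw [util_tie, util_lose hβc] at h1
        have hco : (1:ℝ) ≤ (vh:ℝ)/2 - (c:ℝ) := by rw [hvhr]; linarith
        have : σl c ≤ 0 := by nlinarith [hlnn c]
        exact le_antisymm this (hlnn c)
  -- Step C : l bids some a ≥ m with positive probability
  obtain ⟨a, hamem, hane⟩ :=
    Finset.exists_ne_zero_of_sum_ne_zero (s := range (pbar+1)) (f := σl)
      (by rw [hlsum]; exact one_ne_zero)
  have hapos : 0 < σl a := lt_of_le_of_ne (hlnn a) (Ne.symm hane)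
  have ham : m ≤ a := by
    by_contra h
    push_neg at h
    exact hane (stepB a h)
  have hap : a < pbar + 1 := mem_range.mp hamem
  obtain ⟨a', rfl⟩ : ∃ a', a = a' + 1 := ⟨a - 1, by omega⟩
  have ha'm : m - 1 ≤ a' := by omega
  have ha'r : (m:ℝ) ≤ (a':ℝ) + 1 := by exact_mod_cast (show m ≤ a' + 1 from ham)
  -- Step D : l strictly prefers a' to a'+1, contradiction
  have hle := hNl (a'+1) hamem hapos a' (mem_range.mpr (by omega))
  have hsum := eu_sub pbar vl σh (a'+1) a'
  have hβa' : β < a' := by omega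
  have hgt : 0 < ∑ i ∈ range (pbar+1), σh i * (util vl a' i - util vl (a'+1) i) := by
    apply Finset.sum_pos'
    · intro i _
      rcases lt_trichotomy i a' with h1 | h1 | h1
      · rw [util_win h1, util_win (lt_trans h1 (Nat.lt_succ_self a'))]
        apply mul_nonneg (hhnn i)
        push_cast; linarith
      · subst h1
        rw [util_tie, util_win (Nat.lt_succ_self i)]
        apply mul_nonneg (hhnn i)
        rw [hvlr]; push_cast; linarith
      · rcases Nat.lt_or_ge (a'+1) i with h2 | h2
        · rw [util_lose (lt_trans (Nat.lt_succ_self a') h2), util_lose h2]; simp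
        · have hi : i = a' + 1 := by omega
          subst hi
          rw [util_lose (Nat.lt_succ_self a'), util_tie]
          apply mul_nonneg (hhnn _)
          rw [hvlr]; push_cast; linarith
    · refine ⟨β, mem_range.mpr (by omega), ?_⟩
      rw [util_win hβa', util_win (lt_trans hβa' (Nat.lt_succ_self a'))]
      apply mul_pos hβpos
      push_cast; linarith
  rw [← hsum] at hgt
  linarith
end

section
/- In the winner-bid auction, in every Nash equilibrium the higher-valuation agent's expected payoff is at least v_h/2 and the lower-valuation agent's expected payoff is at least v_l/2. -/
open Finset Filter

lemma util_half_ge (v c : ℕ) (hev : Even v) : (v : ℝ) / 2 ≤ util v (v / 2) c := by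
  obtain ⟨r, rfl⟩ := hev
  have h2 : (r + r) / 2 = r := by omega
  rw [h2]
  unfold util
  have hcast : ((r + r : ℕ) : ℝ) = 2 * r := by push_cast; ring
  rcases lt_trichotomy c r with h | h | h
  · rw [if_pos h, hcast]; linarith
  · subst h
    rw [if_neg (lt_irrefl _), if_neg (lt_irrefl _), hcast]; linarith
  · rw [if_neg (by omega), if_pos h, hcast]
    have : (r : ℝ) ≤ c := by exact_mod_cast h.le
    linarith

lemma eu_half_ge (pbar v : ℕ) (hev : Even v) (σ : ℕ → ℝ) (hσ : IsStrategy pbar σ) :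
    (v : ℝ) / 2 ≤ eu pbar v σ (v / 2) := by
  obtain ⟨hnn, hsum, _⟩ := hσ
  calc (v : ℝ) / 2 = ∑ c ∈ range (pbar + 1), σ c * ((v : ℝ) / 2) := by
        rw [← Finset.sum_mul, hsum, one_mul]
    _ ≤ eu pbar v σ (v / 2) := by
        apply Finset.sum_le_sum
        intro c _
        exact mul_le_mul_of_nonneg_left (util_half_ge v c hev) (hnn c)

lemma payoff_ge (pbar v : ℕ) (hev : Even v) (hp : v / 2 ≤ pbar)
    (σown σopp : ℕ → ℝ) (hown : IsStrategy pbar σown) (hopp : IsStrategy pbar σopp)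
    (hbr : ∀ b ∈ range (pbar + 1), 0 < σown b →
      ∀ b' ∈ range (pbar + 1), eu pbar v σopp b' ≤ eu pbar v σopp b) :
    (v : ℝ) / 2 ≤ payoff pbar v σown σopp := by
  obtain ⟨hnn, hsum, _⟩ := hown
  have hmem : v / 2 ∈ range (pbar + 1) := Finset.mem_range.2 (by omega)
  calc (v : ℝ) / 2 = ∑ b ∈ range (pbar + 1), σown b * ((v : ℝ) / 2) := by
        rw [← Finset.sum_mul, hsum, one_mul]
    _ ≤ payoff pbar v σown σopp := by
        apply Finset.sum_le_sum
        intro b hb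
        rcases eq_or_lt_of_le (hnn b) with h | h
        · rw [← h]; simp
        · apply mul_le_mul_of_nonneg_left _ (hnn b)
          exact le_trans (eu_half_ge pbar v hev σopp hopp) (hbr b hb h _ hmem)

theorem stmt2 (vl vh pbar : ℕ) (hvl : 0 < vl) (hevl : Even vl) (hevh : Even vh)
    (hle : vl ≤ vh) (hpbar : vh / 2 + 2 ≤ pbar) (σl σh : ℕ → ℝ)
    (hN : IsNash pbar vl vh σl σh) :
    (vl : ℝ) / 2 ≤ payoff pbar vl σl σh ∧ (vh : ℝ) / 2 ≤ payoff pbar vh σh σl := by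
  obtain ⟨hsl, hsh, hbl, hbh⟩ := hN
  have hlh : vl / 2 ≤ vh / 2 := Nat.div_le_div_right hle
  exact ⟨payoff_ge pbar vl hevl (by omega) σl σh hsl hsh hbl,
         payoff_ge pbar vh hevh (by omega) σh σl hsh hsl hbh⟩
end

section
/- In the winner-bid auction with equal valuations v_1 = v_2 = v, every Nash equilibrium gives each agent expected payoff exactly v/2. -/
open Finset Filter

lemma util_add (v b c : ℕ) : util v b c + util v c b = v := by
  rcases lt_trichotomy b c with h | h | h
  · simp [util, h, lt_asymm h]
  · subst h; simp [util]
  · simp [util, h, lt_asymm h]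

lemma payoff_double (pbar v : ℕ) (σ τ : ℕ → ℝ) :
    payoff pbar v σ τ =
      ∑ b ∈ range (pbar + 1), ∑ c ∈ range (pbar + 1), σ b * τ c * util v b c := by
  unfold payoff eu
  refine Finset.sum_congr rfl fun b _ => ?_
  rw [Finset.mul_sum]
  exact Finset.sum_congr rfl fun c _ => by ring

lemma payoff_add (pbar v : ℕ) (σ τ : ℕ → ℝ)
    (hσ : IsStrategy pbar σ) (hτ : IsStrategy pbar τ) :
    payoff pbar v σ τ + payoff pbar v τ σ = v := by
  rw [payoff_double, payoff_double, Finset.sum_comm (s := range (pbar + 1))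
    (t := range (pbar + 1)) (f := fun b c => τ b * σ c * util v b c),
    ← Finset.sum_add_distrib]
  have : ∀ b ∈ range (pbar + 1),
      ((∑ c ∈ range (pbar + 1), σ b * τ c * util v b c) +
       ∑ c ∈ range (pbar + 1), τ c * σ b * util v c b) = σ b * v := by
    intro b _
    rw [← Finset.sum_add_distrib]
    have : ∀ c ∈ range (pbar + 1),
        σ b * τ c * util v b c + τ c * σ b * util v c b = σ b * v * τ c := by
      intro c _
      have := util_add v b c
      linear_combination (σ b * τ c) * this
    rw [Finset.sum_congr rfl this, ← Finset.mul_sum, hτ.2.1, mul_one]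
  rw [Finset.sum_congr rfl this, ← Finset.sum_mul, hσ.2.1, one_mul]

lemma payoff_ge_s3 (pbar v : ℕ) (σ τ : ℕ → ℝ)
    (hσ : IsStrategy pbar σ) (hτ : IsStrategy pbar τ)
    (hBR : ∀ b ∈ range (pbar + 1), 0 < σ b →
      ∀ b' ∈ range (pbar + 1), eu pbar v τ b' ≤ eu pbar v τ b) :
    (v : ℝ) / 2 ≤ payoff pbar v σ τ := by
  have step1 : ∀ b' ∈ range (pbar + 1), eu pbar v τ b' ≤ payoff pbar v σ τ := by
    intro b' hb'
    have : eu pbar v τ b' = ∑ b ∈ range (pbar + 1), σ b * eu pbar v τ b' := by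
      rw [← Finset.sum_mul, hσ.2.1, one_mul]
    rw [this]
    unfold payoff
    refine Finset.sum_le_sum fun b hb => ?_
    rcases (hσ.1 b).lt_or_eq with h | h
    · exact mul_le_mul_of_nonneg_left (hBR b hb h b' hb') (hσ.1 b)
    · rw [← h]; simp
  have hself : payoff pbar v τ τ = (v : ℝ) / 2 := by
    have := payoff_add pbar v τ τ hτ hτ
    linarith
  rw [← hself]
  unfold payoff
  calc ∑ b ∈ range (pbar + 1), τ b * eu pbar v τ b
      ≤ ∑ b ∈ range (pbar + 1), τ b * payoff pbar v σ τ := by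
        refine Finset.sum_le_sum fun b hb => ?_
        exact mul_le_mul_of_nonneg_left (step1 b hb) (hτ.1 b)
    _ = payoff pbar v σ τ := by rw [← Finset.sum_mul, hτ.2.1, one_mul]

theorem stmt3 (v pbar : ℕ) (hv : 0 < v) (hev : Even v)
    (hpbar : v / 2 + 2 ≤ pbar) (σ1 σ2 : ℕ → ℝ)
    (hN : IsNash pbar v v σ1 σ2) :
    payoff pbar v σ1 σ2 = (v : ℝ) / 2 ∧ payoff pbar v σ2 σ1 = (v : ℝ) / 2 := by
  have h1 := payoff_add pbar v σ1 σ2 hN.1 hN.2.1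
  have h2 := payoff_ge_s3 pbar v σ1 σ2 hN.1 hN.2.1 hN.2.2.1
  have h3 := payoff_ge_s3 pbar v σ2 σ1 hN.2.1 hN.1 hN.2.2.2
  constructor <;> linarith
end

section
/- In the winner-bid auction with valuations v_l < v_h, every efficient Nash equilibrium σ (one in which the higher-valuation agent receives the object with probability one) has the higher-valuation agent playing a pure bid p ∈ {v_l/2,...,v_h/2}, yielding payoffs π_l = p and π_h = v_h − p. -/
open Finset Filter

theorem stmt5 (vl vh pbar : ℕ) (hvl : 0 < vl) (hevl : Even vl) (hevh : Even vh)
    (hlt : vl < vh) (hpbar : vh / 2 + 2 ≤ pbar) (σl σh : ℕ → ℝ)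
    (hN : IsNash pbar vl vh σl σh) (hEff : Efficient pbar σl σh) :
    ∃ p : ℕ, vl / 2 ≤ p ∧ p ≤ vh / 2 ∧ σh p = 1 ∧
      payoff pbar vl σl σh = (p : ℝ) ∧ payoff pbar vh σh σl = (vh : ℝ) - p := by

  obtain ⟨⟨hl0, hl1, hl2⟩, ⟨hh0, hh1, hh2⟩, hNl, hNh⟩ := hN
  have hlrange : ∀ b, σl b ≠ 0 → b ∈ range (pbar+1) := by
    intro b hb
    rw [Finset.mem_range, Nat.lt_succ_iff]
    by_contra h
    push_neg at h
    exact hb (hl2 b h)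
  have hhrange : ∀ b, σh b ≠ 0 → b ∈ range (pbar+1) := by
    intro b hb
    rw [Finset.mem_range, Nat.lt_succ_iff]
    by_contra h
    push_neg at h
    exact hb (hh2 b h)
  -- separation of supports from efficiency
  have hsep : ∀ b c, σl b ≠ 0 → σh c ≠ 0 → b < c := by
    intro b c hb hc
    have hb' : 0 < σl b := (hl0 b).lt_of_ne (Ne.symm hb)
    have hc' : 0 < σh c := (hh0 c).lt_of_ne (Ne.symm hc)
    by_contra h
    push_neg at h
    have hnn : ∀ x ∈ range (pbar+1), (0:ℝ) ≤ ∑ y ∈ range (pbar+1),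
        σl x * σh y * (if y < x then 1 else if x < y then 0 else 1/2) := by
      intro x _
      refine Finset.sum_nonneg fun y _ => ?_
      have : (0:ℝ) ≤ (if y < x then (1:ℝ) else if x < y then 0 else 1/2) := by
        split_ifs <;> norm_num
      exact mul_nonneg (mul_nonneg (hl0 x) (hh0 y)) this
    have hinner := (Finset.sum_eq_zero_iff_of_nonneg hnn).mp hEff b (hlrange b hb)
    have hnn2 : ∀ y ∈ range (pbar+1), (0:ℝ) ≤
        σl b * σh y * (if y < b then 1 else if b < y then 0 else 1/2) := by
      intro y _
      have : (0:ℝ) ≤ (if y < b then (1:ℝ) else if b < y then 0 else 1/2) := by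
        split_ifs <;> norm_num
      exact mul_nonneg (mul_nonneg (hl0 b) (hh0 y)) this
    have hterm := (Finset.sum_eq_zero_iff_of_nonneg hnn2).mp hinner c (hhrange c hc)
    have hw : (0:ℝ) < (if c < b then (1:ℝ) else if b < c then 0 else 1/2) := by
      rw [if_neg (by omega : ¬ b < c)]
      split_ifs <;> norm_num
    have : (0:ℝ) < σl b * σh c * (if c < b then (1:ℝ) else if b < c then 0 else 1/2) :=
      mul_pos (mul_pos hb' hc') hw
    exact absurd hterm (ne_of_gt this)
  -- the support of σh
  obtain ⟨p, hpmem, hp⟩ := Finset.exists_ne_zero_of_sum_ne_zero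
    (by rw [hh1]; norm_num : ∑ b ∈ range (pbar+1), σh b ≠ 0)
  have hp' : 0 < σh p := (hh0 p).lt_of_ne (Ne.symm hp)
  -- eu of h against σl at any bid in h's support
  have heuh : ∀ b, σh b ≠ 0 → eu pbar vh σl b = (vh:ℝ) - b := by
    intro b hb
    unfold eu
    have hcg : ∀ c ∈ range (pbar+1), σl c * util vh b c = σl c * ((vh:ℝ) - b) := by
      intro c _
      by_cases hc : σl c = 0
      · rw [hc, zero_mul, zero_mul]
      · have : c < b := hsep c b hc hb
        unfold util
        rw [if_pos this]
    rw [Finset.sum_congr rfl hcg, ← Finset.sum_mul, hl1, one_mul]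
  -- σh is pure at p
  have hsupp : ∀ b, σh b ≠ 0 → b = p := by
    intro b hb
    have hb' : 0 < σh b := (hh0 b).lt_of_ne (Ne.symm hb)
    have h1 := hNh p hpmem hp' b (hhrange b hb)
    have h2 := hNh b (hhrange b hb) hb' p hpmem
    rw [heuh b hb, heuh p hp] at h1 h2
    have : (b:ℝ) = (p:ℝ) := by linarith
    exact_mod_cast this
  have hh_eq : ∀ c, c ≠ p → σh c = 0 := by
    intro c hc
    by_contra h
    exact hc (hsupp c h)
  have hhp : σh p = 1 := by
    have := Finset.sum_eq_single (s := range (pbar+1)) (f := σh) p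
      (fun c _ hc => hh_eq c hc) (fun h => absurd hpmem h)
    rw [hh1] at this
    exact this.symm
  -- eu of l against σh
  have heul : ∀ b, eu pbar vl σh b = util vl b p := by
    intro b
    unfold eu
    rw [Finset.sum_eq_single (s := range (pbar+1)) p
      (fun c _ hc => by rw [hh_eq c hc, zero_mul]) (fun h => absurd hpmem h), hhp, one_mul]
  -- an element of l's support
  obtain ⟨q, hqmem, hq⟩ := Finset.exists_ne_zero_of_sum_ne_zero
    (by rw [hl1]; norm_num : ∑ b ∈ range (pbar+1), σl b ≠ 0)
  have hq' : 0 < σl q := (hl0 q).lt_of_ne (Ne.symm hq)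
  have hqp : q < p := hsep q p hq hp
  have hppos : 1 ≤ p := by omega
  -- lower bound: vl/2 ≤ p
  have hlb : (vl:ℝ)/2 ≤ (p:ℝ) := by
    have hle := hNl q hqmem hq' p hpmem
    rw [heul p, heul q] at hle
    unfold util at hle
    rw [if_neg (lt_irrefl p), if_neg (lt_irrefl p), if_neg (by omega : ¬ p < q),
      if_pos hqp] at hle
    linarith
  obtain ⟨kl, hkl⟩ := hevl
  have hlbn : vl / 2 ≤ p := by
    have h2 : ((kl:ℝ)) ≤ (p:ℝ) := by
      have : ((vl:ℝ)) = (kl:ℝ) + (kl:ℝ) := by exact_mod_cast congrArg (Nat.cast (R := ℝ)) hkl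
      linarith
    have : kl ≤ p := by exact_mod_cast h2
    omega
  -- upper bound: p ≤ vh/2
  have hp1mem : p - 1 ∈ range (pbar+1) := by
    rw [Finset.mem_range] at hpmem ⊢
    omega
  have hcast : ((p-1:ℕ):ℝ) = (p:ℝ) - 1 := by
    have : 1 ≤ p := hppos
    push_cast [this]
    ring
  have key : ∀ c ∈ range (pbar+1), σl c * util vh (p-1) c
      = σl c * ((vh:ℝ) - ((p:ℝ)-1)) +
        (if c = p-1 then σl c * ((vh:ℝ)/2 - ((vh:ℝ) - ((p:ℝ)-1))) else 0) := by
    intro c _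
    by_cases hc : σl c = 0
    · rw [hc]
      simp
    · have hcp : c < p := hsep c p hc hp
      by_cases hce : c = p - 1
      · subst hce
        unfold util
        rw [if_neg (lt_irrefl _), if_neg (lt_irrefl _), if_pos rfl, hcast]
        ring
      · have hclt : c < p - 1 := by omega
        unfold util
        rw [if_pos hclt, if_neg hce, hcast]
        ring
  have heup1 : eu pbar vh σl (p-1)
      = ((vh:ℝ) - ((p:ℝ)-1)) + σl (p-1) * ((vh:ℝ)/2 - ((vh:ℝ) - ((p:ℝ)-1))) := by
    unfold eu
    rw [Finset.sum_congr rfl key, Finset.sum_add_distrib, ← Finset.sum_mul, hl1, one_mul,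
      Finset.sum_ite_eq' (range (pbar+1)) (p-1), if_pos hp1mem]
  obtain ⟨kh, hkh⟩ := hevh
  have hubn : p ≤ vh / 2 := by
    have hineq := hNh p hpmem hp' (p-1) hp1mem
    rw [heuh p hp, heup1] at hineq
    set L := σl (p-1) with hL
    have hL0 : 0 ≤ L := hl0 _
    have hL1 : L ≤ 1 := by
      have hle := Finset.single_le_sum (f := σl) (fun i _ => hl0 i) hp1mem
      rw [hl1] at hle
      exact hle
    have h1 : (1:ℝ) ≤ L * ((vh:ℝ)/2 - (p:ℝ) + 1) := by nlinarith
    have hxpos : (0:ℝ) < (vh:ℝ)/2 - (p:ℝ) + 1 := by nlinarith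
    have hx : (1:ℝ) ≤ (vh:ℝ)/2 - (p:ℝ) + 1 := by
      nlinarith [mul_nonneg (sub_nonneg.mpr hL1) hxpos.le]
    have hvhc : ((vh:ℝ)) = (kh:ℝ) + (kh:ℝ) := by exact_mod_cast congrArg (Nat.cast (R := ℝ)) hkh
    have : (p:ℝ) ≤ (kh:ℝ) := by linarith
    have : p ≤ kh := by exact_mod_cast this
    omega
  -- payoffs
  have hpayl : payoff pbar vl σl σh = (p:ℝ) := by
    unfold payoff
    have hcg : ∀ b ∈ range (pbar+1), σl b * eu pbar vl σh b = σl b * (p:ℝ) := by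
      intro b _
      by_cases hb : σl b = 0
      · rw [hb, zero_mul, zero_mul]
      · have hbp : b < p := hsep b p hb hp
        rw [heul b]
        unfold util
        rw [if_neg (by omega : ¬ p < b), if_pos hbp]
    rw [Finset.sum_congr rfl hcg, ← Finset.sum_mul, hl1, one_mul]
  have hpayh : payoff pbar vh σh σl = (vh:ℝ) - (p:ℝ) := by
    unfold payoff
    rw [Finset.sum_eq_single (s := range (pbar+1)) p
      (fun c _ hc => by rw [hh_eq c hc, zero_mul]) (fun h => absurd hpmem h),
      hhp, one_mul, heuh p hp]
  exact ⟨p, hlbn, hubn, hhp, hpayl, hpayh⟩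
end

section
/- In the winner-bid auction with valuations v_l < v_h, for every integer t ∈ {0,1,...,(v_h − v_l)/2}, the pure strategy profile in which the lower-valuation agent bids v_l/2 + t − 1 and the higher-valuation agent bids v_l/2 + t is a Nash equilibrium, with payoffs (v_l/2 + t, v_h/2 + (v_h−v_l)/2 − t). -/
open Finset Filter

lemma pureS_isStrategy {pbar b : ℕ} (h : b ≤ pbar) : IsStrategy pbar (pureS b) := by
  refine ⟨fun c => by unfold pureS; split <;> norm_num, ?_, fun c hc => by
    unfold pureS; rw [if_neg]; omega⟩
  unfold pureS
  rw [Finset.sum_ite_eq' (range (pbar + 1)) b (fun _ => (1 : ℝ))]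
  simp [Finset.mem_range, Nat.lt_succ_iff, h]

lemma eu_pure {pbar v c : ℕ} (b : ℕ) (h : c ≤ pbar) :
    eu pbar v (pureS c) b = util v b c := by
  unfold eu pureS
  simp only [ite_mul, one_mul, zero_mul]
  rw [Finset.sum_ite_eq' (range (pbar + 1)) c (fun x => util v b x)]
  simp [Finset.mem_range, Nat.lt_succ_iff, h]

lemma payoff_pure {pbar v b : ℕ} (σ : ℕ → ℝ) (h : b ≤ pbar) :
    payoff pbar v (pureS b) σ = eu pbar v σ b := by
  unfold payoff pureS
  simp only [ite_mul, one_mul, zero_mul]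
  rw [Finset.sum_ite_eq' (range (pbar + 1)) b (fun x => eu pbar v σ x)]
  simp [Finset.mem_range, Nat.lt_succ_iff, h]

theorem stmt6 (vl vh pbar : ℕ) (hvl : 4 ≤ vl) (hevl : Even vl) (hevh : Even vh)
    (hlt : vl < vh) (hpbar : vh / 2 + 2 ≤ pbar) (t : ℕ) (ht : t ≤ (vh - vl) / 2) :
    IsNash pbar vl vh (pureS (vl / 2 + t - 1)) (pureS (vl / 2 + t)) ∧
    payoff pbar vl (pureS (vl / 2 + t - 1)) (pureS (vl / 2 + t)) = ((vl / 2 + t : ℕ) : ℝ) ∧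
    payoff pbar vh (pureS (vl / 2 + t)) (pureS (vl / 2 + t - 1)) =
      ((vh / 2 + ((vh - vl) / 2 - t) : ℕ) : ℝ) := by
  obtain ⟨a, ha⟩ := hevl
  obtain ⟨d, hd⟩ := hevh
  set bl := vl / 2 + t - 1 with hbl
  set bh := vl / 2 + t with hbh
  have h1 : bh = bl + 1 := by omega
  have h2 : 2 * bh ≤ vh := by omega
  have h3 : vl ≤ 2 * bh := by omega
  have h4 : bh ≤ pbar := by omega
  have h5 : bl ≤ pbar := by omega
  have hblh : bl < bh := by omega
  have hRl : util vl bl bh = (bh : ℝ) := by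
    unfold util
    rw [if_neg (by omega), if_pos hblh]
  have hRh : util vh bh bl = (vh : ℝ) - bh := by
    unfold util
    rw [if_pos hblh]
  have hc2 : (2 : ℝ) * bh ≤ vh := by exact_mod_cast h2
  have hc3 : (vl : ℝ) ≤ 2 * bh := by exact_mod_cast h3
  have keyl : ∀ b' ≤ pbar, util vl b' bh ≤ util vl bl bh := by
    intro b' _
    rw [hRl]
    unfold util
    split_ifs with hA hB
    · have : (bh : ℝ) < b' := by exact_mod_cast hA
      linarith
    · exact le_refl _
    · have hb : b' = bh := by omega
      subst hb
      linarith
  have keyh : ∀ b' ≤ pbar, util vh b' bl ≤ util vh bh bl := by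
    intro b' _
    rw [hRh]
    unfold util
    split_ifs with hA hB
    · have : (bh : ℝ) ≤ b' := by exact_mod_cast (by omega : bh ≤ b')
      linarith
    · have : (bl : ℝ) + 1 = bh := by exact_mod_cast h1.symm
      linarith
    · have hb : b' = bl := by omega
      subst hb
      have : (bl : ℝ) + 1 = bh := by exact_mod_cast h1.symm
      linarith
  have hposl : ∀ b, 0 < pureS bl b → b = bl := by
    intro b hb
    by_contra h
    simp [pureS, h] at hb
  have hposh : ∀ b, 0 < pureS bh b → b = bh := by
    intro b hb
    by_contra h
    simp [pureS, h] at hb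
  refine ⟨⟨pureS_isStrategy h5, pureS_isStrategy h4, ?_, ?_⟩, ?_, ?_⟩
  · intro b _ hb b' hb'
    rw [hposl b hb, eu_pure _ h4, eu_pure _ h4]
    exact keyl b' (by simpa [Nat.lt_succ_iff] using hb')
  · intro b _ hb b' hb'
    rw [hposh b hb, eu_pure _ h5, eu_pure _ h5]
    exact keyh b' (by simpa [Nat.lt_succ_iff] using hb')
  · rw [payoff_pure _ h5, eu_pure _ h4, hRl]
  · rw [payoff_pure _ h4, eu_pure _ h5, hRh]
    have : vh / 2 + ((vh - vl) / 2 - t) = vh - bh := by omega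
    rw [this]
    push_cast [Nat.cast_sub (by omega : bh ≤ vh)]
    ring
end

section
/- In the winner-bid auction with valuations v_l < v_h, if a Nash equilibrium σ is inefficient (the lower-valuation agent wins with positive probability), then the common boundary bid p of the two supports equals v_l/2, and the sum of expected equilibrium payoffs is at least v_h − 1. -/
open Finset Filter

theorem stmt8 (vl vh pbar : ℕ) (hvl : 0 < vl) (hevl : Even vl) (hevh : Even vh)
    (hlt : vl < vh) (hpbar : vh / 2 + 2 ≤ pbar) (σl σh : ℕ → ℝ)
    (hN : IsNash pbar vl vh σl σh) (p : ℕ)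
    (hsepl : ∀ b, 0 < σl b → b ≤ p) (hseph : ∀ b, 0 < σh b → p ≤ b)
    (hp : 0 < σh p) (hinef : 0 < σl p) :
    p = vl / 2 ∧
      (vh : ℝ) - 1 ≤ payoff pbar vl σl σh + payoff pbar vh σh σl := by
  obtain ⟨k, hk⟩ := hevl
  obtain ⟨m, hm⟩ := hevh
  obtain ⟨hσl, hσh, hNl, hNh⟩ := hN
  have hkm : k < m := by omega
  have hmpbar : m + 2 ≤ pbar := by omega
  have hσl0 : ∀ b, 0 ≤ σl b := hσl.1
  have hσh0 : ∀ b, 0 ≤ σh b := hσh.1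
  have hσhz : ∀ c, c < p → σh c = 0 := by
    intro c hc
    by_contra h
    exact absurd (hseph c (lt_of_le_of_ne (hσh0 c) (Ne.symm h))) (by omega)
  have hppbar : p ≤ pbar := by
    by_contra h
    have := hσh.2.2 p (by omega)
    linarith
  have hpmem : p ∈ range (pbar + 1) := mem_range.mpr (by omega)
  -- key difference computation for the low-value agent
  have heudiff : ∀ b, b < p →
      eu pbar vl σh p - eu pbar vl σh b = σh p * ((vl : ℝ) / 2 - p) := by
    intro b hb
    rw [eu, eu, ← Finset.sum_sub_distrib]
    have hcongr : ∀ c ∈ range (pbar + 1),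
        σh c * util vl p c - σh c * util vl b c
          = if c = p then σh p * ((vl : ℝ) / 2 - (p : ℝ)) else 0 := by
      intro c _
      rcases lt_trichotomy c p with h | h | h
      · rw [hσhz c h, if_neg (by omega : ¬ c = p)]; ring
      · subst h
        rw [if_pos rfl]
        simp only [util]
        rw [if_neg (lt_irrefl c), if_neg (lt_irrefl c),
          if_neg (by omega : ¬ c < b), if_pos hb]
        ring
      · rw [if_neg (by omega : ¬ c = p)]
        simp only [util]
        rw [if_neg (by omega : ¬ c < p), if_pos h,
          if_neg (by omega : ¬ c < b), if_pos (by omega : b < c)]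
        ring
    rw [Finset.sum_congr rfl hcongr, Finset.sum_ite_eq' (range (pbar + 1)) p, if_pos hpmem]
  -- Step A : p ≤ k
  have hstepA : p ≤ k := by
    rcases Nat.eq_zero_or_pos p with hp0 | hp0
    · omega
    · have h0mem : (0 : ℕ) ∈ range (pbar + 1) := mem_range.mpr (by omega)
      have hbr := hNl p hpmem hinef 0 h0mem
      have hd := heudiff 0 hp0
      have h2 : 0 ≤ σh p * ((vl : ℝ) / 2 - p) := by linarith
      have h3 : 0 ≤ (vl : ℝ) / 2 - p := by nlinarith
      have h4 : (p : ℝ) ≤ (k : ℝ) := by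
        rw [hk] at h3; push_cast at h3; linarith
      exact_mod_cast h4
  -- Step B : ¬ p < k
  have hstepB : ¬ p < k := by
    intro hpk
    have hσlz : ∀ b, b ≠ p → σl b = 0 := by
      intro b hbp
      rcases lt_or_gt_of_ne hbp with hb | hb
      · by_contra h
        have hbpos : 0 < σl b := lt_of_le_of_ne (hσl0 b) (Ne.symm h)
        have hbmem : b ∈ range (pbar + 1) := mem_range.mpr (by omega)
        have hbr := hNl b hbmem hbpos p hpmem
        have hd := heudiff b hb
        have hpos : 0 < σh p * ((vl : ℝ) / 2 - p) := by
          apply mul_pos hp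
          have : (p : ℝ) < (k : ℝ) := by exact_mod_cast hpk
          rw [hk]; push_cast; linarith
        linarith
      · by_contra h
        exact absurd (hsepl b (lt_of_le_of_ne (hσl0 b) (Ne.symm h))) (by omega)
    have hσlp : σl p = 1 := by
      have hs := Finset.sum_eq_single (s := range (pbar + 1)) (f := σl) p
        (fun b _ hbp => hσlz b hbp) (fun hnp => absurd hpmem hnp)
      exact hs.symm.trans hσl.2.1
    have heuh : ∀ b, eu pbar vh σl b = util vh b p := by
      intro b
      rw [eu, Finset.sum_eq_single (s := range (pbar + 1)) p
        (fun c _ hcp => by rw [hσlz c hcp, zero_mul])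
        (fun hnp => absurd hpmem hnp), hσlp, one_mul]
    have hp1mem : p + 1 ∈ range (pbar + 1) := mem_range.mpr (by omega)
    have hbr := hNh p hpmem hp (p + 1) hp1mem
    rw [heuh p, heuh (p + 1)] at hbr
    simp only [util] at hbr
    rw [if_pos (Nat.lt_succ_self p), if_neg (lt_irrefl p), if_neg (lt_irrefl p)] at hbr
    push_cast at hbr
    have hmr : (m : ℝ) ≤ (p : ℝ) + 1 := by rw [hm] at hbr; push_cast at hbr; linarith
    have : m ≤ p + 1 := by exact_mod_cast hmr
    omega
  have hpk : p = k := by omega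
  -- payoff bounds
  have hpayl : eu pbar vl σh p ≤ payoff pbar vl σl σh := by
    rw [payoff]
    have h1 : ∀ b ∈ range (pbar + 1),
        σl b * eu pbar vl σh p ≤ σl b * eu pbar vl σh b := by
      intro b hb
      rcases eq_or_lt_of_le (hσl0 b) with h | h
      · rw [← h]; simp
      · exact mul_le_mul_of_nonneg_left (hNl b hb h p hpmem) (hσl0 b)
    calc eu pbar vl σh p = ∑ b ∈ range (pbar + 1), σl b * eu pbar vl σh p := by
          rw [← Finset.sum_mul, hσl.2.1, one_mul]
      _ ≤ _ := Finset.sum_le_sum h1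
  have hpayh : eu pbar vh σl p ≤ payoff pbar vh σh σl := by
    rw [payoff]
    have h1 : ∀ b ∈ range (pbar + 1),
        σh b * eu pbar vh σl p ≤ σh b * eu pbar vh σl b := by
      intro b hb
      rcases eq_or_lt_of_le (hσh0 b) with h | h
      · rw [← h]; simp
      · exact mul_le_mul_of_nonneg_left (hNh b hb h p hpmem) (hσh0 b)
    calc eu pbar vh σl p = ∑ b ∈ range (pbar + 1), σh b * eu pbar vh σl p := by
          rw [← Finset.sum_mul, hσh.2.1, one_mul]
      _ ≤ _ := Finset.sum_le_sum h1
  have heul : (p : ℝ) ≤ eu pbar vl σh p := by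
    rw [eu]
    calc (p : ℝ) = ∑ c ∈ range (pbar + 1), σh c * (p : ℝ) := by
          rw [← Finset.sum_mul, hσh.2.1, one_mul]
      _ ≤ ∑ c ∈ range (pbar + 1), σh c * util vl p c := by
          apply Finset.sum_le_sum
          intro c _
          rcases eq_or_lt_of_le (hσh0 c) with h | h
          · rw [← h]; simp
          · apply mul_le_mul_of_nonneg_left _ (hσh0 c)
            have hpc : p ≤ c := hseph c h
            rcases eq_or_lt_of_le hpc with he | hlt
            · subst he
              simp only [util]
              rw [if_neg (lt_irrefl p), if_neg (lt_irrefl p)]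
              have : (vl : ℝ) = (p : ℝ) + (p : ℝ) := by
                rw [hk, hpk]; push_cast; ring
              rw [this]; linarith
            · simp only [util]
              rw [if_neg (by omega : ¬ c < p), if_pos hlt]
              exact_mod_cast Nat.le_of_lt hlt
  have hp1mem : p + 1 ∈ range (pbar + 1) := mem_range.mpr (by omega)
  have heuh1 : eu pbar vh σl (p + 1) = (vh : ℝ) - ((p : ℝ) + 1) := by
    rw [eu]
    have hcongr : ∀ c ∈ range (pbar + 1),
        σl c * util vh (p + 1) c = σl c * ((vh : ℝ) - ((p : ℝ) + 1)) := by
      intro c _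
      rcases eq_or_lt_of_le (hσl0 c) with h | h
      · rw [← h]; ring
      · have hc : c ≤ p := hsepl c h
        simp only [util]
        rw [if_pos (by omega : c < p + 1)]
        push_cast; ring
    rw [Finset.sum_congr rfl hcongr, ← Finset.sum_mul, hσl.2.1, one_mul]
  have hNashh := hNh p hpmem hp (p + 1) hp1mem
  constructor
  · omega
  · rw [heuh1] at hNashh
    linarith
end

section
/- In the winner-bid auction, in any Nash equilibrium whose separating bid p satisfies p ≥ v_l/2 + 1, the probability σ_l(p−1) that the lower-valuation agent bids p−1 satisfies σ_l(p−1) ≥ 1/(v_h/2 − p + 1). -/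
open Finset Filter

theorem stmt9 (vl vh pbar : ℕ) (hvl : 0 < vl) (hevl : Even vl) (hevh : Even vh)
    (hlt : vl < vh) (hpbar : vh / 2 + 2 ≤ pbar) (σl σh : ℕ → ℝ)
    (hN : IsNash pbar vl vh σl σh) (p : ℕ)
    (hsepl : ∀ b, 0 < σl b → b ≤ p) (hseph : ∀ b, 0 < σh b → p ≤ b)
    (hp : 0 < σh p) (hp1 : vl / 2 + 1 ≤ p) (hp2 : p ≤ vh / 2) :
    1 / (((vh / 2 : ℕ) : ℝ) - (p : ℝ) + 1) ≤ σl (p - 1) := by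
 
  obtain ⟨hSl, hSh, hBl, hBh⟩ := hN
  obtain ⟨hlnn, hlsum, hlzero⟩ := hSl
  obtain ⟨hhnn, hhsum, hhzero⟩ := hSh
  have h1p : 1 ≤ p := by omega
  have hp2' : p ≤ vh / 2 := hp2
  have hppbar : p ≤ pbar := by omega
  have hpm : p ∈ range (pbar + 1) := mem_range.2 (by omega)
  have hpm1 : p - 1 ∈ range (pbar + 1) := mem_range.2 (by omega)
  have hcastp1 : ((p - 1 : ℕ) : ℝ) = (p : ℝ) - 1 := by
    have := Nat.cast_sub h1p (R := ℝ); simpa using this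
  have hvhc : (vh : ℝ) = 2 * ((vh / 2 : ℕ) : ℝ) := by
    obtain ⟨k, hk⟩ := hevh
    have : vh = 2 * (vh / 2) := by omega
    exact_mod_cast this
  have hvlc : (vl : ℝ) = 2 * ((vl / 2 : ℕ) : ℝ) := by
    obtain ⟨k, hk⟩ := hevl
    have : vl = 2 * (vl / 2) := by omega
    exact_mod_cast this
  have hhz : ∀ c, c < p → σh c = 0 := by
    intro c hc
    by_contra h
    have := hseph c (lt_of_le_of_ne (hhnn c) (Ne.symm h))
    omega
  have hlz : ∀ c, p < c → σl c = 0 := by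
    intro c hc
    by_contra h
    have := hsepl c (lt_of_le_of_ne (hlnn c) (Ne.symm h))
    omega
  -- Step A : σl p = 0
  have hlp0 : σl p = 0 := by
    by_contra h
    have hpos : 0 < σl p := lt_of_le_of_ne (hlnn p) (Ne.symm h)
    have hkey := hBl p hpm hpos (p - 1) hpm1
    have hdiff : eu pbar vl σh (p - 1) - eu pbar vl σh p
        = σh p * ((p : ℝ) - ((vl / 2 : ℕ) : ℝ)) := by
      rw [eu, eu, ← Finset.sum_sub_distrib]
      rw [Finset.sum_eq_single_of_mem p hpm]
      · have h1 : ¬ p < p - 1 := by omega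
        have h2 : p - 1 < p := by omega
        simp only [util, if_neg h1, if_pos h2, lt_irrefl, if_neg (lt_irrefl p)]
        norm_num
        rw [hvlc]
        ring
      · intro c hc hcp
        rcases lt_or_gt_of_ne hcp with hl1 | hg1
        · rw [hhz c hl1]; ring
        · have h1 : p - 1 < c := by omega
          have h2 : ¬ c < p - 1 := by omega
          have h3 : ¬ c < p := by omega
          simp only [util, if_neg h2, if_pos h1, if_neg h3, if_pos hg1]
          ring
    have hone : (1 : ℝ) ≤ (p : ℝ) - ((vl / 2 : ℕ) : ℝ) := by
      have : (vl / 2 : ℕ) + 1 ≤ p := hp1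
      have := Nat.cast_le (α := ℝ).2 this
      push_cast at this
      linarith
    have hpos2 : 0 < σh p * ((p : ℝ) - ((vl / 2 : ℕ) : ℝ)) :=
      mul_pos hp (by linarith)
    linarith [hdiff, hkey]
  -- Step B : main inequality
  have hkey := hBh p hpm hp (p - 1) hpm1
  have hsplitIdx : p - 1 ≤ pbar + 1 := by omega
  -- sum of σl over range (p-1)
  have hsum1 : ∑ c ∈ range (p - 1), σl c = 1 - σl (p - 1) := by
    have hs : (∑ c ∈ Finset.Ico 0 (p - 1), σl c) + ∑ c ∈ Finset.Ico (p - 1) (pbar + 1), σl c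
        = ∑ c ∈ Finset.Ico 0 (pbar + 1), σl c :=
      Finset.sum_Ico_consecutive _ (Nat.zero_le _) hsplitIdx
    have htail : ∑ c ∈ Finset.Ico (p - 1) (pbar + 1), σl c = σl (p - 1) := by
      apply Finset.sum_eq_single_of_mem
      · exact Finset.mem_Ico.2 ⟨le_refl _, by omega⟩
      · intro c hc hcp
        have hc' := Finset.mem_Ico.1 hc
        rcases Nat.lt_or_ge p c with hgt | hle
        · exact hlz c hgt
        · have : c = p := by omega
          rw [this, hlp0]
    simp only [← Finset.range_eq_Ico] at hs
    rw [htail, hlsum] at hs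
    linarith
  have hdiff : eu pbar vh σl (p - 1) - eu pbar vh σl p
      = (∑ c ∈ range (p - 1), σl c)
        + σl (p - 1) * (((vh : ℝ)) / 2 - ((vh : ℝ) - (p : ℝ))) := by
    rw [eu, eu, ← Finset.sum_sub_distrib]
    have hs : (∑ c ∈ Finset.Ico 0 (p - 1), (σl c * util vh (p-1) c - σl c * util vh p c))
        + ∑ c ∈ Finset.Ico (p - 1) (pbar + 1), (σl c * util vh (p-1) c - σl c * util vh p c)
        = ∑ c ∈ Finset.Ico 0 (pbar + 1), (σl c * util vh (p-1) c - σl c * util vh p c) :=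
      Finset.sum_Ico_consecutive _ (Nat.zero_le _) hsplitIdx
    rw [Finset.range_eq_Ico, ← hs]
    have hhead : ∑ c ∈ Finset.Ico 0 (p - 1), (σl c * util vh (p-1) c - σl c * util vh p c)
        = ∑ c ∈ Finset.Ico 0 (p - 1), σl c := by
      apply Finset.sum_congr rfl
      intro c hc
      have hc' := Finset.mem_Ico.1 hc
      have h1 : c < p - 1 := hc'.2
      have h2 : c < p := by omega
      simp only [util, if_pos h1, if_pos h2]
      rw [hcastp1]
      ring
    have htail : ∑ c ∈ Finset.Ico (p - 1) (pbar + 1), (σl c * util vh (p-1) c - σl c * util vh p c)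
        = σl (p - 1) * (((vh : ℝ)) / 2 - ((vh : ℝ) - (p : ℝ))) := by
      rw [Finset.sum_eq_single_of_mem (p - 1) (Finset.mem_Ico.2 ⟨le_refl _, by omega⟩)]
      · have h1 : ¬ (p - 1 < p - 1) := lt_irrefl _
        have h2 : p - 1 < p := by omega
        simp only [util, if_neg h1, if_pos h2]
        rw [hcastp1]
        ring
      · intro c hc hcp
        have hc' := Finset.mem_Ico.1 hc
        rcases Nat.lt_or_ge p c with hgt | hle
        · rw [hlz c hgt]; ring
        · have : c = p := by omega
          rw [this, hlp0]; ring
    rw [hhead, htail, Finset.range_eq_Ico]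
  have hHp : (p : ℝ) ≤ ((vh / 2 : ℕ) : ℝ) := by exact_mod_cast hp2
  have hXpos : (0 : ℝ) < ((vh / 2 : ℕ) : ℝ) - (p : ℝ) + 1 := by linarith
  have hmain : (1 : ℝ) ≤ σl (p - 1) * (((vh / 2 : ℕ) : ℝ) - (p : ℝ) + 1) := by
    have h0 : eu pbar vh σl (p - 1) - eu pbar vh σl p ≤ 0 := by linarith
    rw [hdiff, hsum1] at h0
    rw [hvhc] at h0
    nlinarith [h0]
  rw [div_le_iff₀ hXpos]
  exact hmain
end

section
/- In the winner-bid auction, for the lower-valuation agent with value v_l, and any separating bid p with p ≥ v_l/2 + 2, the bid p−1 is weakly dominated by each bid in {v_l/2 − 1, v_l/2, ..., p−2}: against any strategy of the opponent supported in {p,...,p̄} ∪ {b : b ≤ p−1}, each such lower bid yields weakly higher expected utility than p−1, strictly higher against some opponent bid. -/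
open Finset Filter

theorem stmt10 (vl vh pbar : ℕ) (hvl : 0 < vl) (hevl : Even vl) (hevh : Even vh)
    (hlt : vl < vh) (hpbar : vh / 2 + 2 ≤ pbar) (p : ℕ)
    (hp1 : vl / 2 + 2 ≤ p) (hp2 : p ≤ vh / 2)
    (b : ℕ) (hb1 : vl / 2 - 1 ≤ b) (hb2 : b ≤ p - 2) :
    (∀ c ∈ range (pbar + 1), util vl (p - 1) c ≤ util vl b c) ∧
    (∃ c ∈ range (pbar + 1), util vl (p - 1) c < util vl b c) := by
  obtain ⟨k, hkk⟩ := hevl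
  set q := p - 1 with hqdef
  have hbq : b < q := by omega
  have hkb : k ≤ b + 1 := by omega
  have hkq : k + 1 ≤ q := by omega
  have hbpbar : b ≤ pbar := by omega
  have hvlr : (vl : ℝ) = (k : ℝ) + k := by exact_mod_cast congrArg (Nat.cast (R := ℝ)) hkk
  have hbqr : (b : ℝ) < q := by exact_mod_cast hbq
  have hkbr : (k : ℝ) ≤ b + 1 := by exact_mod_cast hkb
  have hkqr : (k : ℝ) + 1 ≤ q := by exact_mod_cast hkq
  have hstrict : util vl q b < util vl b b := by
    unfold util
    rw [if_pos hbq, if_neg (lt_irrefl b), if_neg (lt_irrefl b)]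
    rw [hvlr]; linarith
  constructor
  · intro c _
    unfold util
    rcases lt_trichotomy c b with h | h | h
    · rw [if_pos h, if_pos (h.trans hbq)]
      have : (b : ℝ) ≤ q := le_of_lt hbqr
      linarith
    · rw [h, if_pos hbq, if_neg (lt_irrefl b), if_neg (lt_irrefl b)]
      rw [hvlr]; linarith
    · rw [if_neg (by omega : ¬ c < b), if_pos h]
      have hcr : (b : ℝ) < c := by exact_mod_cast h
      rcases lt_trichotomy c q with h2 | h2 | h2
      · rw [if_pos h2]
        rw [hvlr]; linarith
      · rw [h2, if_neg (lt_irrefl q), if_neg (lt_irrefl q)]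
        rw [hvlr]; linarith
      · rw [if_neg (by omega : ¬ c < q), if_pos h2]
  · exact ⟨b, by simp [Finset.mem_range]; omega, hstrict⟩
end

section
/- Let σ be a weakly payoff monotone strategy profile for the winner-bid auction game with valuations v_l < v_h, and let p ≥ v_l/2 + 2 be an integer. If for the lower-valuation agent every bid b ∈ {v_l/2 − 1, ..., p−2} has expected utility at least that of p−1, then σ_l(p−1) ≤ 1/(p − v_l/2 + 1). -/
open Finset Filter

theorem stmt11 (vl vh pbar : ℕ) (hvl : 0 < vl) (hevl : Even vl) (hevh : Even vh)
    (hlt : vl < vh) (hpbar : vh / 2 + 2 ≤ pbar) (σl σh : ℕ → ℝ)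
    (hSl : IsStrategy pbar σl) (hSh : IsStrategy pbar σh)
    (hmon : WPMon pbar vl σl σh) (p : ℕ)
    (hp1 : vl / 2 + 2 ≤ p) (hp2 : p ≤ vh / 2)
    (hbetter : ∀ b, vl / 2 - 1 ≤ b → b ≤ p - 2 →
      eu pbar vl σh (p - 1) ≤ eu pbar vl σh b) :
    σl (p - 1) ≤ 1 / ((p : ℝ) - ((vl / 2 : ℕ) : ℝ) + 1) := by
  set k := vl / 2 with hk
  have hk1 : 1 ≤ k := by obtain ⟨m, hm⟩ := hevl; omega
  have hple : p - 1 ≤ pbar := by omega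
  -- σl (p-1) ≤ σl b for all b in Icc (k-1) (p-1)
  have key : ∀ b ∈ Finset.Icc (k - 1) (p - 1), σl (p - 1) ≤ σl b := by
    intro b hb
    simp only [Finset.mem_Icc] at hb
    rcases eq_or_lt_of_le hb.2 with h | h
    · rw [h]
    · by_contra hcon
      push_neg at hcon
      have := hmon (p - 1) (by simp; omega) b (by simp; omega) hcon
      have h2 := hbetter b hb.1 (by omega)
      linarith
  have hcard : (Finset.Icc (k - 1) (p - 1)).card = p - k + 1 := by
    rw [Nat.card_Icc]; omega
  have hsum : ∑ b ∈ Finset.Icc (k - 1) (p - 1), σl b ≤ 1 := by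
    rw [← hSl.2.1]
    apply Finset.sum_le_sum_of_subset_of_nonneg
    · intro x hx
      simp only [Finset.mem_Icc] at hx
      simp; omega
    · intro i _ _; exact hSl.1 i
  have hlow : ((p - k + 1 : ℕ) : ℝ) * σl (p - 1) ≤ 1 := by
    calc ((p - k + 1 : ℕ) : ℝ) * σl (p - 1)
        = ∑ _b ∈ Finset.Icc (k - 1) (p - 1), σl (p - 1) := by
          rw [Finset.sum_const, hcard, nsmul_eq_mul]
      _ ≤ ∑ b ∈ Finset.Icc (k - 1) (p - 1), σl b := Finset.sum_le_sum key
      _ ≤ 1 := hsum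
  have hcast : ((p - k + 1 : ℕ) : ℝ) = (p : ℝ) - (k : ℝ) + 1 := by
    have : k ≤ p := by omega
    push_cast [this]; ring
  rw [hcast] at hlow
  have hpos : (0 : ℝ) < (p : ℝ) - (k : ℝ) + 1 := by
    have : k + 1 ≤ p := by omega
    have := (Nat.cast_le (α := ℝ)).2 this
    push_cast at this; linarith
  rw [le_div_iff₀ hpos, mul_comm]
  exact hlow
end

section
/- Suppose a mechanism (M,φ) has, for every valuation profile, a Nash equilibrium (possibly mixed) that with probability one yields efficient and equitable allocations. Then for each profile v with v_l < v_h and each t ∈ {0,...,ES(v)−1}, there is an efficient Nash equilibrium σ of (M,φ,v) with v_l/2 + t ≤ π_l(σ) ≤ v_l/2 + t + 1. -/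
open Finset

/-- An allocation: the winner of the object (an agent in `Fin 2`) together with the
monetary transfer in `{0,...,pbar}` paid by the winner to the other agent. -/
abbrev Alloc (pbar : ℕ) := Fin 2 × Fin (pbar + 1)

/-- Utility of agent `i` with value `v` at allocation `a`: `v - p` if `i` receives
the object and pays `p`; `p` if `i` is paid `p`. -/
noncomputable def aUtil (pbar : ℕ) (i : Fin 2) (v : ℕ) (a : Alloc pbar) : ℝ :=
  if a.1 = i then (v : ℝ) - ((a.2 : ℕ) : ℝ) else ((a.2 : ℕ) : ℝ)

/-- A probability distribution on a finite type. -/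
def IsDist {α : Type*} [Fintype α] (f : α → ℝ) : Prop :=
  (∀ a, 0 ≤ f a) ∧ ∑ a, f a = 1

/-- Expected utility of agent 1 (index 0) with value `v` from sending message `m1`
when agent 2 plays the mixed strategy `σ2`. -/
noncomputable def mEU1 {M1 M2 : Type*} [Fintype M2] (pbar : ℕ)
    (φ : M1 → M2 → Alloc pbar → ℝ) (v : ℕ) (m1 : M1) (σ2 : M2 → ℝ) : ℝ :=
  ∑ m2, σ2 m2 * ∑ a, φ m1 m2 a * aUtil pbar 0 v a

/-- Expected utility of agent 2 (index 1) with value `v` from sending message `m2`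
when agent 1 plays the mixed strategy `σ1`. -/
noncomputable def mEU2 {M1 M2 : Type*} [Fintype M1] (pbar : ℕ)
    (φ : M1 → M2 → Alloc pbar → ℝ) (v : ℕ) (m2 : M2) (σ1 : M1 → ℝ) : ℝ :=
  ∑ m1, σ1 m1 * ∑ a, φ m1 m2 a * aUtil pbar 1 v a

/-- Nash equilibrium (possibly in mixed strategies) of the game induced by the
mechanism `φ` at the valuation profile `(v1, v2)`. -/
def MNash {M1 M2 : Type*} [Fintype M1] [Fintype M2] (pbar : ℕ)
    (φ : M1 → M2 → Alloc pbar → ℝ) (v1 v2 : ℕ) (σ1 : M1 → ℝ) (σ2 : M2 → ℝ) : Prop :=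
  IsDist σ1 ∧ IsDist σ2 ∧
  (∀ m1, 0 < σ1 m1 → ∀ m1', mEU1 pbar φ v1 m1' σ2 ≤ mEU1 pbar φ v1 m1 σ2) ∧
  (∀ m2, 0 < σ2 m2 → ∀ m2', mEU2 pbar φ v2 m2' σ1 ≤ mEU2 pbar φ v2 m2 σ1)

/-- Expected payoff of agent `i` with value `v` under the strategy profile `(σ1, σ2)`. -/
noncomputable def mPayoff {M1 M2 : Type*} [Fintype M1] [Fintype M2] (pbar : ℕ)
    (φ : M1 → M2 → Alloc pbar → ℝ) (i : Fin 2) (v : ℕ)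
    (σ1 : M1 → ℝ) (σ2 : M2 → ℝ) : ℝ :=
  ∑ m1, ∑ m2, σ1 m1 * σ2 m2 * ∑ a, φ m1 m2 a * aUtil pbar i v a

/-- An allocation is efficient and equitable for the valuation profile `(v1, v2)`:
the winner has the (weakly) highest valuation, and no agent prefers the other's
allotment to her own. -/
def GoodAlloc (pbar v1 v2 : ℕ) (a : Alloc pbar) : Prop :=
  (if a.1 = 0 then v2 ≤ v1 else v1 ≤ v2) ∧
  ((if a.1 = 0 then (v1 : ℝ) else (v2 : ℝ)) - ((a.2 : ℕ) : ℝ) ≥ ((a.2 : ℕ) : ℝ)) ∧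
  (((a.2 : ℕ) : ℝ) ≥ (if a.1 = 0 then (v2 : ℝ) else (v1 : ℝ)) - ((a.2 : ℕ) : ℝ))

/-- The profile `(σ1, σ2)` obtains with positive probability only allocations
satisfying `Q`. -/
def OnlyOutcomes {M1 M2 : Type*} (pbar : ℕ) (φ : M1 → M2 → Alloc pbar → ℝ)
    (σ1 : M1 → ℝ) (σ2 : M2 → ℝ) (Q : Alloc pbar → Prop) : Prop :=
  ∀ m1 m2 a, 0 < σ1 m1 → 0 < σ2 m2 → 0 < φ m1 m2 a → Q a

theorem stmt17 {M1 M2 : Type*} [Fintype M1] [Fintype M2]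
    (pbar vbar : ℕ) (hpbar : vbar / 2 + 2 ≤ pbar)
    (φ : M1 → M2 → Alloc pbar → ℝ) (hφ : ∀ m1 m2, IsDist (φ m1 m2))
    (H : ∀ v1 v2 : ℕ, 0 < v1 → Even v1 → v1 ≤ vbar → 0 < v2 → Even v2 → v2 ≤ vbar →
      ∃ σ1 : M1 → ℝ, ∃ σ2 : M2 → ℝ, MNash pbar φ v1 v2 σ1 σ2 ∧
        OnlyOutcomes pbar φ σ1 σ2 (GoodAlloc pbar v1 v2)) :
    ∀ v1 v2 : ℕ, 0 < v1 → Even v1 → v1 ≤ vbar → Even v2 → v2 ≤ vbar → v1 < v2 →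
      ∀ t, t < (v2 - v1) / 2 →
        ∃ σ1 : M1 → ℝ, ∃ σ2 : M2 → ℝ, MNash pbar φ v1 v2 σ1 σ2 ∧
          OnlyOutcomes pbar φ σ1 σ2 (fun a => a.1 = 1) ∧
          ((v1 / 2 + t : ℕ) : ℝ) ≤ mPayoff pbar φ 0 v1 σ1 σ2 ∧
          mPayoff pbar φ 0 v1 σ1 σ2 ≤ ((v1 / 2 + t + 1 : ℕ) : ℝ) := by
  intro v1 v2 hv1pos hv1even hv1le hv2even hv2le hlt t ht
  obtain ⟨k1, hk1⟩ := hv1even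
  obtain ⟨k2, hk2⟩ := hv2even
  set c : ℕ := k1 + t with hc
  have hv2c : 2 * c + 2 ≤ v2 := by omega
  obtain ⟨σ1, σ2, hN, hO⟩ := H (2 * c) (2 * c + 2) (by omega) ⟨c, by ring⟩ (by omega)
    (by omega) ⟨c + 1, by ring⟩ (by omega)
  obtain ⟨hσ1d, hσ2d, hBR1, hBR2⟩ := hN
  -- every good allocation at the auxiliary profile: winner is agent 1, price in [c, c+1]
  have hGood : ∀ a : Alloc pbar, GoodAlloc pbar (2 * c) (2 * c + 2) a →
      a.1 = 1 ∧ (c : ℝ) ≤ ((a.2 : ℕ) : ℝ) ∧ ((a.2 : ℕ) : ℝ) ≤ (c : ℝ) + 1 := by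
    rintro ⟨i, p⟩ ⟨h1, h2, h3⟩
    fin_cases i
    · simp at h1
    · refine ⟨rfl, ?_, ?_⟩
      · simp only [show ((⟨1, by omega⟩ : Fin 2) = 0) = False from by simp, if_false] at h3
        push_cast at h3 ⊢
        linarith
      · simp only [show ((⟨1, by omega⟩ : Fin 2) = 0) = False from by simp, if_false] at h2
        push_cast at h2 ⊢
        linarith
  have hφnn : ∀ m1 m2 a, 0 ≤ φ m1 m2 a := fun m1 m2 => (hφ m1 m2).1
  -- mass on agent-1-winning allocations
  set W1 : M1 → ℝ := fun m1 => ∑ m2, σ2 m2 * ∑ a, (if a.1 = 0 then φ m1 m2 a else 0)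
    with hW1
  set W2 : M2 → ℝ := fun m2 => ∑ m1, σ1 m1 * ∑ a, (if a.1 = 1 then φ m1 m2 a else 0)
    with hW2
  have hdec1 : ∀ (v v' : ℕ) (m1 : M1), mEU1 pbar φ v m1 σ2 =
      mEU1 pbar φ v' m1 σ2 + ((v : ℝ) - (v' : ℝ)) * W1 m1 := by
    intro v v' m1
    have hA : ∀ m2 : M2, (∑ a, φ m1 m2 a * aUtil pbar 0 v a)
        = (∑ a, φ m1 m2 a * aUtil pbar 0 v' a)
          + ((v : ℝ) - (v' : ℝ)) * ∑ a, (if a.1 = 0 then φ m1 m2 a else 0) := by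
      intro m2
      rw [Finset.mul_sum, ← Finset.sum_add_distrib]
      refine Finset.sum_congr rfl fun a _ => ?_
      simp only [aUtil]
      split_ifs <;> ring
    unfold mEU1
    simp only [hW1]
    rw [Finset.mul_sum, ← Finset.sum_add_distrib]
    refine Finset.sum_congr rfl fun m2 _ => ?_
    rw [hA m2]; ring
  have hdec2 : ∀ (v v' : ℕ) (m2 : M2), mEU2 pbar φ v m2 σ1 =
      mEU2 pbar φ v' m2 σ1 + ((v : ℝ) - (v' : ℝ)) * W2 m2 := by
    intro v v' m2
    have hA : ∀ m1 : M1, (∑ a, φ m1 m2 a * aUtil pbar 1 v a)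
        = (∑ a, φ m1 m2 a * aUtil pbar 1 v' a)
          + ((v : ℝ) - (v' : ℝ)) * ∑ a, (if a.1 = 1 then φ m1 m2 a else 0) := by
      intro m1
      rw [Finset.mul_sum, ← Finset.sum_add_distrib]
      refine Finset.sum_congr rfl fun a _ => ?_
      simp only [aUtil]
      split_ifs <;> ring
    unfold mEU2
    simp only [hW2]
    rw [Finset.mul_sum, ← Finset.sum_add_distrib]
    refine Finset.sum_congr rfl fun m1 _ => ?_
    rw [hA m1]; ring
  have hW1nn : ∀ m1, 0 ≤ W1 m1 := by
    intro m1
    refine Finset.sum_nonneg fun m2 _ => mul_nonneg (hσ2d.1 m2) ?_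
    refine Finset.sum_nonneg fun a _ => ?_
    split_ifs
    · exact hφnn m1 m2 a
    · exact le_refl 0
  have hW1z : ∀ m1, 0 < σ1 m1 → W1 m1 = 0 := by
    intro m1 hm1
    refine Finset.sum_eq_zero fun m2 _ => ?_
    rcases eq_or_lt_of_le (hσ2d.1 m2) with h | h
    · rw [← h, zero_mul]
    · rw [mul_eq_zero]; right
      refine Finset.sum_eq_zero fun a _ => ?_
      split_ifs with ha
      · by_contra hne
        have hp : 0 < φ m1 m2 a := lt_of_le_of_ne (hφnn m1 m2 a) (Ne.symm hne)
        have := (hGood a (hO m1 m2 a hm1 h hp)).1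
        rw [this] at ha
        exact absurd ha (by decide)
      · rfl
  have hW2le : ∀ m2, W2 m2 ≤ 1 := by
    intro m2
    have : ∀ m1 : M1, σ1 m1 * ∑ a, (if a.1 = 1 then φ m1 m2 a else 0) ≤ σ1 m1 := by
      intro m1
      have hle1 : (∑ a, (if a.1 = 1 then φ m1 m2 a else 0)) ≤ 1 := by
        rw [← (hφ m1 m2).2]
        refine Finset.sum_le_sum fun a _ => ?_
        split_ifs
        · exact le_rfl
        · exact hφnn m1 m2 a
      calc σ1 m1 * ∑ a, (if a.1 = 1 then φ m1 m2 a else 0) ≤ σ1 m1 * 1 :=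
            mul_le_mul_of_nonneg_left hle1 (hσ1d.1 m1)
        _ = σ1 m1 := mul_one _
    calc W2 m2 ≤ ∑ m1, σ1 m1 := Finset.sum_le_sum fun m1 _ => this m1
      _ = 1 := hσ1d.2
  have hW2one : ∀ m2, 0 < σ2 m2 → W2 m2 = 1 := by
    intro m2 hm2
    have : ∀ m1 : M1, σ1 m1 * ∑ a, (if a.1 = 1 then φ m1 m2 a else 0) = σ1 m1 := by
      intro m1
      rcases eq_or_lt_of_le (hσ1d.1 m1) with h | h
      · rw [← h, zero_mul]
      · have : (∑ a, (if a.1 = 1 then φ m1 m2 a else 0)) = 1 := by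
          rw [← (hφ m1 m2).2]
          refine Finset.sum_congr rfl fun a _ => ?_
          split_ifs with ha
          · rfl
          · by_contra hne
            have hp : 0 < φ m1 m2 a := lt_of_le_of_ne (hφnn m1 m2 a)
              fun hh => hne (by rw [← hh])
            exact ha (hGood a (hO m1 m2 a h hm2 hp)).1
        rw [this, mul_one]
    calc W2 m2 = ∑ m1, σ1 m1 := Finset.sum_congr rfl fun m1 _ => this m1
      _ = 1 := hσ1d.2
  have hv1c : (v1 : ℝ) ≤ ((2 * c : ℕ) : ℝ) := by exact_mod_cast (by omega : v1 ≤ 2 * c)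
  have hv2cR : ((2 * c + 2 : ℕ) : ℝ) ≤ (v2 : ℝ) := by exact_mod_cast hv2c
  refine ⟨σ1, σ2, ⟨hσ1d, hσ2d, ?_, ?_⟩, ?_, ?_, ?_⟩
  · -- agent 1 best response at true value v1
    intro m1 hm1 m1'
    have e1 := hdec1 v1 (2 * c) m1'
    have e2 := hdec1 v1 (2 * c) m1
    have hz : W1 m1 = 0 := hW1z m1 hm1
    have hz' : ((v1 : ℝ) - ((2 * c : ℕ) : ℝ)) * W1 m1 = 0 := by rw [hz, mul_zero]
    have hle := hBR1 m1 hm1 m1'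
    have hneg : ((v1 : ℝ) - ((2 * c : ℕ) : ℝ)) * W1 m1' ≤ 0 :=
      mul_nonpos_of_nonpos_of_nonneg (by linarith) (hW1nn m1')
    linarith
  · -- agent 2 best response at true value v2
    intro m2 hm2 m2'
    have e1 := hdec2 v2 (2 * c + 2) m2'
    have e2 := hdec2 v2 (2 * c + 2) m2
    have hone : W2 m2 = 1 := hW2one m2 hm2
    have hone' : ((v2 : ℝ) - ((2 * c + 2 : ℕ) : ℝ)) * W2 m2
        = (v2 : ℝ) - ((2 * c + 2 : ℕ) : ℝ) := by rw [hone, mul_one]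
    have hle := hBR2 m2 hm2 m2'
    have hd : (0 : ℝ) ≤ (v2 : ℝ) - ((2 * c + 2 : ℕ) : ℝ) := by linarith
    have hbd : ((v2 : ℝ) - ((2 * c + 2 : ℕ) : ℝ)) * W2 m2'
        ≤ ((v2 : ℝ) - ((2 * c + 2 : ℕ) : ℝ)) * 1 :=
      mul_le_mul_of_nonneg_left (hW2le m2') hd
    linarith
  · intro m1 m2 a h1 h2 h3
    exact (hGood a (hO m1 m2 a h1 h2 h3)).1
  · -- lower payoff bound
    have hcast : ((v1 / 2 + t : ℕ) : ℝ) = (c : ℝ) := by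
      have : v1 / 2 + t = c := by omega
      rw [this]
    rw [hcast]
    unfold mPayoff
    have key : ∑ m1, ∑ m2, σ1 m1 * σ2 m2 * (c : ℝ) = (c : ℝ) := by
      have h2 : ∀ m1 : M1, ∑ m2, σ1 m1 * σ2 m2 * (c : ℝ) = σ1 m1 * (c : ℝ) := by
        intro m1
        rw [show (∑ m2, σ1 m1 * σ2 m2 * (c : ℝ)) = (∑ m2, σ2 m2) * (σ1 m1 * (c : ℝ)) by
          rw [Finset.sum_mul]; exact Finset.sum_congr rfl fun m2 _ => by ring]
        rw [hσ2d.2, one_mul]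
      rw [Finset.sum_congr rfl fun m1 _ => h2 m1, ← Finset.sum_mul, hσ1d.2, one_mul]
    rw [← key]
    refine Finset.sum_le_sum fun m1 _ => Finset.sum_le_sum fun m2 _ => ?_
    rcases eq_or_lt_of_le (hσ1d.1 m1) with h1 | h1
    · rw [← h1]; simp
    rcases eq_or_lt_of_le (hσ2d.1 m2) with h2 | h2
    · rw [← h2]; simp
    refine mul_le_mul_of_nonneg_left ?_ (mul_nonneg (hσ1d.1 m1) (hσ2d.1 m2))
    have hsum : ∑ a, φ m1 m2 a = 1 := (hφ m1 m2).2
    calc (c : ℝ) = ∑ a, φ m1 m2 a * (c : ℝ) := by rw [← Finset.sum_mul, hsum, one_mul]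
      _ ≤ ∑ a, φ m1 m2 a * aUtil pbar 0 v1 a := by
        refine Finset.sum_le_sum fun a _ => ?_
        rcases eq_or_lt_of_le (hφnn m1 m2 a) with hp | hp
        · rw [← hp, zero_mul, zero_mul]
        · obtain ⟨ha1, hplo, hphi⟩ := hGood a (hO m1 m2 a h1 h2 hp)
          have hu : aUtil pbar 0 v1 a = ((a.2 : ℕ) : ℝ) := by
            simp only [aUtil, ha1]
            rw [if_neg (by decide)]
          rw [hu]
          exact mul_le_mul_of_nonneg_left hplo (le_of_lt hp)
  · -- upper payoff bound
    have hcast : ((v1 / 2 + t + 1 : ℕ) : ℝ) = (c : ℝ) + 1 := by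
      have : v1 / 2 + t + 1 = c + 1 := by omega
      rw [this]; push_cast; ring
    rw [hcast]
    unfold mPayoff
    have key : ∑ m1, ∑ m2, σ1 m1 * σ2 m2 * ((c : ℝ) + 1) = (c : ℝ) + 1 := by
      have h2 : ∀ m1 : M1, ∑ m2, σ1 m1 * σ2 m2 * ((c : ℝ) + 1)
          = σ1 m1 * ((c : ℝ) + 1) := by
        intro m1
        rw [show (∑ m2, σ1 m1 * σ2 m2 * ((c : ℝ) + 1))
            = (∑ m2, σ2 m2) * (σ1 m1 * ((c : ℝ) + 1)) by
          rw [Finset.sum_mul]; exact Finset.sum_congr rfl fun m2 _ => by ring]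
        rw [hσ2d.2, one_mul]
      rw [Finset.sum_congr rfl fun m1 _ => h2 m1, ← Finset.sum_mul, hσ1d.2, one_mul]
    rw [← key]
    refine Finset.sum_le_sum fun m1 _ => Finset.sum_le_sum fun m2 _ => ?_
    rcases eq_or_lt_of_le (hσ1d.1 m1) with h1 | h1
    · rw [← h1]; simp
    rcases eq_or_lt_of_le (hσ2d.1 m2) with h2 | h2
    · rw [← h2]; simp
    refine mul_le_mul_of_nonneg_left ?_ (mul_nonneg (hσ1d.1 m1) (hσ2d.1 m2))
    have hsum : ∑ a, φ m1 m2 a = 1 := (hφ m1 m2).2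
    have step : (∑ a, φ m1 m2 a * aUtil pbar 0 v1 a) ≤ ∑ a, φ m1 m2 a * ((c : ℝ) + 1) := by
      refine Finset.sum_le_sum fun a _ => ?_
      rcases eq_or_lt_of_le (hφnn m1 m2 a) with hp | hp
      · rw [← hp, zero_mul, zero_mul]
      · obtain ⟨ha1, hplo, hphi⟩ := hGood a (hO m1 m2 a h1 h2 hp)
        have hu : aUtil pbar 0 v1 a = ((a.2 : ℕ) : ℝ) := by
          simp only [aUtil, ha1]
          rw [if_neg (by decide)]
        rw [hu]
        exact mul_le_mul_of_nonneg_left hphi (le_of_lt hp)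
    have step2 : (∑ a, φ m1 m2 a * ((c : ℝ) + 1)) = (c : ℝ) + 1 := by
      rw [← Finset.sum_mul, hsum, one_mul]
    linarith
end

section
/- Let σ* be a mixed Nash equilibrium of a mechanism game (M,φ,v*) in which the agent with value v_h* receives the object with probability one. If v_l ≤ v_l* and v_h ≥ v_h*, then σ* is also a Nash equilibrium of (M,φ,(v_l,v_h)) (with the same assignment of roles), and it still gives the object to agent h with probability one. -/
open Finset

lemma aUtil0_mono (pbar : ℕ) (vl vl' : ℕ) (h : vl ≤ vl') (a : Alloc pbar) :
    aUtil pbar 0 vl a ≤ aUtil pbar 0 vl' a := by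
  unfold aUtil
  have : (vl : ℝ) ≤ (vl' : ℝ) := Nat.cast_le.mpr h
  split <;> linarith

lemma aUtil0_win (pbar : ℕ) (v v' : ℕ) (a : Alloc pbar) (ha : a.1 = 1) :
    aUtil pbar 0 v a = aUtil pbar 0 v' a := by
  unfold aUtil
  have : a.1 ≠ 0 := by rw [ha]; decide
  simp [this]

lemma aUtil1_shift_le (pbar : ℕ) (vh vh' : ℕ) (h : vh' ≤ vh) (a : Alloc pbar) :
    aUtil pbar 1 vh a ≤ aUtil pbar 1 vh' a + ((vh : ℝ) - (vh' : ℝ)) := by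
  unfold aUtil
  have : (vh' : ℝ) ≤ (vh : ℝ) := Nat.cast_le.mpr h
  split <;> linarith

lemma aUtil1_shift_eq (pbar : ℕ) (vh vh' : ℕ) (a : Alloc pbar) (ha : a.1 = 1) :
    aUtil pbar 1 vh a = aUtil pbar 1 vh' a + ((vh : ℝ) - (vh' : ℝ)) := by
  unfold aUtil
  rw [if_pos ha, if_pos ha]
  ring

theorem stmt18 {M1 M2 : Type*} [Fintype M1] [Fintype M2]
    (pbar : ℕ) (φ : M1 → M2 → Alloc pbar → ℝ) (hφ : ∀ m1 m2, IsDist (φ m1 m2))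
    (vl vh vl' vh' : ℕ) (hl : vl ≤ vl') (hh : vh' ≤ vh)
    (σ1 : M1 → ℝ) (σ2 : M2 → ℝ)
    (hN : MNash pbar φ vl' vh' σ1 σ2)
    (hwin : OnlyOutcomes pbar φ σ1 σ2 (fun a => a.1 = 1)) :
    MNash pbar φ vl vh σ1 σ2 ∧ OnlyOutcomes pbar φ σ1 σ2 (fun a => a.1 = 1)  := by
  obtain ⟨hσ1, hσ2, hB1, hB2⟩ := hN
  set c : ℝ := (vh : ℝ) - (vh' : ℝ) with hc
  -- inner sums for agent 2
  have inner_le : ∀ m1 m2, ∑ a, φ m1 m2 a * aUtil pbar 1 vh a ≤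
      (∑ a, φ m1 m2 a * aUtil pbar 1 vh' a) + c := by
    intro m1 m2
    have h1 : ∑ a, φ m1 m2 a * aUtil pbar 1 vh a ≤
        ∑ a, φ m1 m2 a * (aUtil pbar 1 vh' a + c) := by
      apply Finset.sum_le_sum
      intro a _
      exact mul_le_mul_of_nonneg_left (aUtil1_shift_le pbar vh vh' hh a) ((hφ m1 m2).1 a)
    have h2 : ∑ a, φ m1 m2 a * (aUtil pbar 1 vh' a + c)
        = (∑ a, φ m1 m2 a * aUtil pbar 1 vh' a) + c := by
      simp only [mul_add]
      rw [Finset.sum_add_distrib, ← Finset.sum_mul, (hφ m1 m2).2, one_mul]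
    linarith
  have mEU2_le : ∀ m2', mEU2 pbar φ vh m2' σ1 ≤ mEU2 pbar φ vh' m2' σ1 + c := by
    intro m2'
    unfold mEU2
    have h1 : ∑ m1, σ1 m1 * ∑ a, φ m1 m2' a * aUtil pbar 1 vh a ≤
        ∑ m1, σ1 m1 * ((∑ a, φ m1 m2' a * aUtil pbar 1 vh' a) + c) := by
      apply Finset.sum_le_sum
      intro m1 _
      exact mul_le_mul_of_nonneg_left (inner_le m1 m2') (hσ1.1 m1)
    have h2 : ∑ m1, σ1 m1 * ((∑ a, φ m1 m2' a * aUtil pbar 1 vh' a) + c)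
        = (∑ m1, σ1 m1 * ∑ a, φ m1 m2' a * aUtil pbar 1 vh' a) + c := by
      simp only [mul_add]
      rw [Finset.sum_add_distrib, ← Finset.sum_mul, hσ1.2, one_mul]
    linarith
  have mEU2_eq : ∀ m2, 0 < σ2 m2 → mEU2 pbar φ vh m2 σ1 = mEU2 pbar φ vh' m2 σ1 + c := by
    intro m2 hm2
    unfold mEU2
    have key : ∀ m1, σ1 m1 * ∑ a, φ m1 m2 a * aUtil pbar 1 vh a
        = σ1 m1 * ((∑ a, φ m1 m2 a * aUtil pbar 1 vh' a) + c) := by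
      intro m1
      by_cases hm1 : 0 < σ1 m1
      · congr 1
        have hinner : ∑ a, φ m1 m2 a * aUtil pbar 1 vh a
            = ∑ a, φ m1 m2 a * (aUtil pbar 1 vh' a + c) := by
          apply Finset.sum_congr rfl
          intro a _
          by_cases hp : 0 < φ m1 m2 a
          · rw [aUtil1_shift_eq pbar vh vh' a (hwin m1 m2 a hm1 hm2 hp)]
          · have : φ m1 m2 a = 0 := le_antisymm (not_lt.mp hp) ((hφ m1 m2).1 a)
            simp [this]
        rw [hinner]
        simp only [mul_add]
        rw [Finset.sum_add_distrib, ← Finset.sum_mul, (hφ m1 m2).2, one_mul]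
      · have : σ1 m1 = 0 := le_antisymm (not_lt.mp hm1) (hσ1.1 m1)
        simp [this]
    rw [Finset.sum_congr rfl (fun m1 _ => key m1)]
    simp only [mul_add]
    rw [Finset.sum_add_distrib, ← Finset.sum_mul, hσ1.2, one_mul]
  have mEU1_le : ∀ m1', mEU1 pbar φ vl m1' σ2 ≤ mEU1 pbar φ vl' m1' σ2 := by
    intro m1'
    unfold mEU1
    apply Finset.sum_le_sum
    intro m2 _
    apply mul_le_mul_of_nonneg_left _ (hσ2.1 m2)
    apply Finset.sum_le_sum
    intro a _
    exact mul_le_mul_of_nonneg_left (aUtil0_mono pbar vl vl' hl a) ((hφ m1' m2).1 a)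
  have mEU1_eq : ∀ m1, 0 < σ1 m1 → mEU1 pbar φ vl m1 σ2 = mEU1 pbar φ vl' m1 σ2 := by
    intro m1 hm1
    unfold mEU1
    apply Finset.sum_congr rfl
    intro m2 _
    by_cases hm2 : 0 < σ2 m2
    · congr 1
      apply Finset.sum_congr rfl
      intro a _
      by_cases hp : 0 < φ m1 m2 a
      · rw [aUtil0_win pbar vl vl' a (hwin m1 m2 a hm1 hm2 hp)]
      · have : φ m1 m2 a = 0 := le_antisymm (not_lt.mp hp) ((hφ m1 m2).1 a)
        simp [this]
    · have : σ2 m2 = 0 := le_antisymm (not_lt.mp hm2) (hσ2.1 m2)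
      simp [this]
  refine ⟨⟨hσ1, hσ2, ?_, ?_⟩, hwin⟩
  · intro m1 hm1 m1'
    calc mEU1 pbar φ vl m1' σ2 ≤ mEU1 pbar φ vl' m1' σ2 := mEU1_le m1'
      _ ≤ mEU1 pbar φ vl' m1 σ2 := hB1 m1 hm1 m1'
      _ = mEU1 pbar φ vl m1 σ2 := (mEU1_eq m1 hm1).symm
  · intro m2 hm2 m2'
    calc mEU2 pbar φ vh m2' σ1 ≤ mEU2 pbar φ vh' m2' σ1 + c := mEU2_le m2'
      _ ≤ mEU2 pbar φ vh' m2 σ1 + c := by linarith [hB2 m2 hm2 m2']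
      _ = mEU2 pbar φ vh m2 σ1 := (mEU2_eq m2 hm2).symm
end

section
/- In the winner-bid auction with v_l < v_h and ES(v) = (v_h − v_l)/2 = 2 and v_l > 3v_h/8, no Nash equilibrium with higher-agent payoff exactly v_h/2 + 1 (i.e., separating bid p = v_l/2 + 1 played as a pure strategy by the higher-valuation agent) is a limit of interior payoff monotone distributions; concretely, in any interior payoff monotone profile close to such σ, the higher-valuation agent places weakly more probability on v_l/2 than on v_l/2 + 1, contradicting that her support is {v_l/2+1}. -/
open Finset Filter

theorem stmt19 (vl vh pbar : ℕ) (hvl : 0 < vl) (hevl : Even vl)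
    (hES : vh = vl + 4) (hratio : 3 * vh < 8 * vl) (hpbar : vh / 2 + 2 ≤ pbar)
    (σl σh : ℕ → ℝ) (hN : IsNash pbar vl vh σl σh)
    (hpure : σh (vl / 2 + 1) = 1)
    (s : ℕ → (ℕ → ℝ) × (ℕ → ℝ))
    (hs : ∀ n, IsStrategy pbar (s n).1 ∧ IsStrategy pbar (s n).2 ∧
      (∀ b ∈ range (pbar + 1), 0 < (s n).1 b) ∧
      (∀ b ∈ range (pbar + 1), 0 < (s n).2 b) ∧
      PMon pbar vl (s n).1 (s n).2 ∧ PMon pbar vh (s n).2 (s n).1)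
    (hconv : ∀ b, Tendsto (fun k => (s k).1 b) atTop (nhds (σl b)) ∧
                  Tendsto (fun k => (s k).2 b) atTop (nhds (σh b))) :
    False := by
  obtain ⟨a, rfl⟩ := hevl
  subst hES
  have ha2 : 2 ≤ a := by omega
  have hpb : a + 4 ≤ pbar := by omega
  have hdiv : (a + a) / 2 = a := by omega
  rw [hdiv] at hpure
  have hmem : ∀ b, b ≤ pbar → b ∈ range (pbar + 1) := fun b hb => mem_range.2 (by omega)
  obtain ⟨hNl, hNh, _, _⟩ := hN
  obtain ⟨hσh0, hσh1, hσhz⟩ := hNh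
  -- σh vanishes off a+1
  have hzero : ∀ c, c ≠ a + 1 → σh c = 0 := by
    intro c hc
    by_cases hcr : c ≤ pbar
    · have hsub : ({a + 1, c} : Finset ℕ) ⊆ range (pbar + 1) := by
        intro x hx
        simp only [Finset.mem_insert, Finset.mem_singleton] at hx
        rcases hx with rfl | rfl
        · exact hmem _ (by omega)
        · exact hmem _ hcr
      have hle := Finset.sum_le_sum_of_subset_of_nonneg hsub
        (fun i _ _ => hσh0 i)
      rw [Finset.sum_pair (Ne.symm hc)] at hle
      rw [hσh1] at hle
      have := hσh0 c
      linarith [hpure]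
    · exact hσhz c (by omega)
  -- cast helpers
  have hc1 : ((a - 1 : ℕ) : ℝ) = (a : ℝ) - 1 := by
    rw [Nat.cast_sub (by omega)]; norm_num
  have hc2 : ((a - 2 : ℕ) : ℝ) = (a : ℝ) - 2 := by
    rw [Nat.cast_sub (by omega)]; norm_num
  -- eu against pure σh
  have heuσh : ∀ b, eu pbar (a + a) σh b = util (a + a) b (a + 1) := by
    intro b
    unfold eu
    rw [Finset.sum_eq_single (a + 1)]
    · rw [hpure, one_mul]
    · intro c _ hc; rw [hzero c hc, zero_mul]
    · intro h; exact absurd (hmem _ (by omega)) h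
  have hu1 : util (a + a) (a - 2) (a + 1) = (a : ℝ) + 1 := by
    unfold util
    rw [if_neg (by omega), if_pos (by omega)]
    push_cast; ring
  have hu2 : util (a + a) (a + 1) (a + 1) = (a : ℝ) := by
    unfold util
    rw [if_neg (by omega), if_neg (by omega)]
    push_cast; ring
  -- eu continuity
  have htend : ∀ b, Tendsto (fun k => eu pbar (a + a) ((s k).2) b) atTop
      (nhds (eu pbar (a + a) σh b)) := by
    intro b
    unfold eu
    exact tendsto_finset_sum _ (fun c _ => ((hconv c).2).mul tendsto_const_nhds)
  have hev1 : ∀ᶠ k in atTop,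
      eu pbar (a + a) ((s k).2) (a + 1) < eu pbar (a + a) ((s k).2) (a - 2) := by
    have h := (htend (a - 2)).sub (htend (a + 1))
    have hlim : eu pbar (a + a) σh (a - 2) - eu pbar (a + a) σh (a + 1) = 1 := by
      rw [heuσh, heuσh, hu1, hu2]; ring
    rw [hlim] at h
    have h2 := h.eventually (eventually_gt_nhds (by norm_num : (0 : ℝ) < 1))
    filter_upwards [h2] with k hk
    exact sub_pos.mp hk
  -- bid a-1 weakly beats bid a for the low agent, always
  have hC : ∀ (τ : ℕ → ℝ), (∀ c, 0 ≤ τ c) →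
      eu pbar (a + a) τ a ≤ eu pbar (a + a) τ (a - 1) := by
    intro τ hτ
    unfold eu
    apply Finset.sum_le_sum
    intro c _
    apply mul_le_mul_of_nonneg_left _ (hτ c)
    rcases lt_trichotomy c (a - 1) with h | h | h
    · unfold util
      rw [if_pos (show c < a - 1 by omega), if_pos (show c < a by omega)]
      push_cast [hc1]; linarith
    · unfold util
      rw [h, if_neg (lt_irrefl _), if_neg (lt_irrefl _),
        if_pos (show a - 1 < a by omega)]
      push_cast [hc1]; linarith
    · rcases lt_trichotomy c a with h2 | h2 | h2
      · exfalso; omega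
      · unfold util
        rw [h2, if_neg (lt_irrefl _), if_neg (lt_irrefl _),
          if_neg (show ¬ a < a - 1 by omega), if_pos (show a - 1 < a by omega)]
        push_cast; linarith
      · unfold util
        rw [if_neg (show ¬ c < a by omega), if_pos h2,
          if_neg (show ¬ c < a - 1 by omega), if_pos (show a - 1 < c by omega)]
  -- bid a weakly beats bid a+1 for the high agent, given the prob comparisons
  have hD : ∀ (τ : ℕ → ℝ), (∀ c, 0 ≤ τ c) → τ a ≤ τ (a - 1) → τ (a + 1) ≤ τ (a - 2) →
      eu pbar (a + a + 4) τ (a + 1) ≤ eu pbar (a + a + 4) τ a := by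
    intro τ hτ h1 h2
    rw [eu, eu, ← sub_nonpos, ← Finset.sum_sub_distrib]
    have key : ∀ c ∈ range (pbar + 1),
        τ c * util (a + a + 4) (a + 1) c - τ c * util (a + a + 4) a c ≤
        (if c = a then τ a else 0) + (if c = a + 1 then τ (a + 1) else 0)
          - (if c = a - 1 then τ (a - 1) else 0) - (if c = a - 2 then τ (a - 2) else 0) := by
      intro c _
      rw [← mul_sub]
      rcases lt_trichotomy c a with hca | hca | hca
      · -- c < a : util diff = -1
        have hud : util (a + a + 4) (a + 1) c - util (a + a + 4) a c = -1 := by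
          unfold util
          rw [if_pos (by omega), if_pos (by omega)]
          push_cast; ring
        rw [hud]
        rcases eq_or_ne c (a - 1) with rfl | hne1
        · rw [if_neg (by omega), if_neg (by omega), if_pos rfl, if_neg (by omega)]
          linarith [hτ (a - 1)]
        · rcases eq_or_ne c (a - 2) with rfl | hne2
          · rw [if_neg (by omega), if_neg (by omega), if_neg (by omega), if_pos rfl]
            linarith [hτ (a - 2)]
          · rw [if_neg (by omega), if_neg (by omega), if_neg hne1, if_neg hne2]
            have := hτ c
            linarith
      · -- c = a : util diff = 1
        have hud : util (a + a + 4) (a + 1) a - util (a + a + 4) a a = 1 := by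
          unfold util
          rw [if_pos (by omega), if_neg (by omega), if_neg (by omega)]
          push_cast; ring
        rw [hca, hud, if_pos rfl, if_neg (by omega), if_neg (by omega), if_neg (by omega)]
        linarith
      · rcases eq_or_ne c (a + 1) with rfl | hne
        · -- c = a+1 : util diff = 1
          have hud : util (a + a + 4) (a + 1) (a + 1) - util (a + a + 4) a (a + 1) = 1 := by
            unfold util
            rw [if_neg (by omega), if_neg (by omega), if_neg (by omega), if_pos (by omega)]
            push_cast; ring
          rw [hud, if_neg (by omega), if_pos rfl, if_neg (by omega), if_neg (by omega)]
          linarith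
        · -- c > a+1 : util diff = 0
          have hud : util (a + a + 4) (a + 1) c - util (a + a + 4) a c = 0 := by
            unfold util
            rw [if_neg (by omega), if_pos (by omega), if_neg (by omega), if_pos (by omega)]
            ring
          rw [hud, if_neg (by omega), if_neg hne, if_neg (by omega), if_neg (by omega)]
          simp
    calc ∑ c ∈ range (pbar + 1),
          (τ c * util (a + a + 4) (a + 1) c - τ c * util (a + a + 4) a c)
        ≤ ∑ c ∈ range (pbar + 1),
            ((if c = a then τ a else 0) + (if c = a + 1 then τ (a + 1) else 0)
              - (if c = a - 1 then τ (a - 1) else 0)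
              - (if c = a - 2 then τ (a - 2) else 0)) := Finset.sum_le_sum key
      _ = τ a + τ (a + 1) - τ (a - 1) - τ (a - 2) := by
          simp only [Finset.sum_sub_distrib, Finset.sum_add_distrib,
            Finset.sum_ite_eq' (range (pbar + 1))]
          rw [if_pos (hmem _ (by omega)), if_pos (hmem _ (by omega)),
            if_pos (hmem _ (by omega)), if_pos (hmem _ (by omega))]
      _ ≤ 0 := by linarith
  -- eventually σh^k (a+1) ≤ σh^k a
  have hfin : ∀ᶠ k in atTop, (s k).2 (a + 1) ≤ (s k).2 a := by
    filter_upwards [hev1] with k hk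
    obtain ⟨⟨hl0, _, _⟩, ⟨hh0, _, _⟩, _, _, hpml, hpmh⟩ := hs k
    have s1 : (s k).1 (a + 1) ≤ (s k).1 (a - 2) :=
      (hpml (a - 2) (hmem _ (by omega)) (a + 1) (hmem _ (by omega))).1 hk.le
    have s3 : (s k).1 a ≤ (s k).1 (a - 1) :=
      (hpml (a - 1) (hmem _ (by omega)) a (hmem _ (by omega))).1 (hC _ hh0)
    have s4 : eu pbar (a + a + 4) ((s k).1) (a + 1) ≤ eu pbar (a + a + 4) ((s k).1) a :=
      hD _ hl0 s3 s1
    exact (hpmh a (hmem _ (by omega)) (a + 1) (hmem _ (by omega))).1 s4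
  have hlim : σh (a + 1) ≤ σh a :=
    le_of_tendsto_of_tendsto (hconv (a + 1)).2 (hconv a).2 hfin
  have h0 : σh a = 0 := hzero a (by omega)
  rw [hpure, h0] at hlim
  linarith
end
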